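/- arXiv:1909.13752 — 4 statements merged into one kernel-verified Lean document; each statement's English description precedes it below -/
import Mathlib

section
/- Let u be a nonzero linear functional on the space 𝒫 of complex polynomials satisfying the distributional equation D(φu) = ψu, where φ(x) = ax² + bx + c has degree at most 2, ψ(x) = dx + e has degree at most 1, and at least one of φ, ψ is not the zero polynomial. Set d_n := d + an and e_n := e + bn for n ≥ 0. Then u is regular if and only if d_n ≠ 0 and φ(−e_n/d_{2n}) ≠ 0 for every integer n ≥ 0. -/
open Polynomial

noncomputable section

namespace HahnOPSPaper

/-- The algebraic dual of the space of complex polynomials. -/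
abbrev PDual : Type := Module.Dual ℂ (Polynomial ℂ)

/-- Left multiplication of a functional by a polynomial: `⟨φu, f⟩ = ⟨u, φf⟩`. -/
def pMul (φ : Polynomial ℂ) (u : PDual) : PDual := u ∘ₗ LinearMap.mulLeft ℂ φ

/-- Distributional derivative: `⟨Du, f⟩ = -⟨u, f'⟩`. -/
def dDeriv (u : PDual) : PDual :=
  -(u ∘ₗ (Polynomial.derivative : Polynomial ℂ →ₗ[ℂ] Polynomial ℂ))

/-- The q-bracket `[n]_q = 1 + q + ⋯ + q^(n-1)`. -/
def qBracket (q : ℂ) (n : ℕ) : ℂ := ∑ i ∈ Finset.range n, q ^ i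

/-- q-factorial `[n]_q!`. -/
def qFact (q : ℂ) (n : ℕ) : ℂ := ∏ i ∈ Finset.range n, qBracket q (i + 1)

/-- `D` is Hahn's operator `D_{q,ω}`, i.e. the (unique, for `(q,ω) ≠ (1,0)`) linear operator
with `((q-1)x + ω)·(Df)(x) = f(qx+ω) - f(x)`. -/
def IsHahn (q ω : ℂ) (D : Polynomial ℂ →ₗ[ℂ] Polynomial ℂ) : Prop :=
  ∀ f : Polynomial ℂ, (C (q - 1) * X + C ω) * D f = f.comp (C q * X + C ω) - f

/-- The operator `(L_{q,ω} f)(x) = f(qx + ω)`. -/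
def Lop (q ω : ℂ) : Polynomial ℂ →ₗ[ℂ] Polynomial ℂ :=
  (aeval (C q * X + C ω)).toLinearMap

/-- The distributional Hahn operator `D_{q,ω}` on the dual, built from the ordinary operator
`D*_{q,ω} = D_{1/q,-ω/q}`: `⟨D_{q,ω}u, f⟩ = -q⁻¹·⟨u, D*_{q,ω}f⟩`. -/
def hahnDual (q : ℂ) (Dstar : Polynomial ℂ →ₗ[ℂ] Polynomial ℂ) (u : PDual) : PDual :=
  (-q⁻¹) • (u ∘ₗ Dstar)

/-- The distributional operator `L_{q,ω}`: `⟨L_{q,ω}u, f⟩ = q⁻¹·⟨u, L_{1/q,-ω/q}f⟩`. -/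
def LDual (q ω : ℂ) (u : PDual) : PDual := q⁻¹ • (u ∘ₗ Lop q⁻¹ (-ω / q))

/-- A functional is regular if it admits a monic orthogonal polynomial sequence. -/
def IsRegularFunc (u : PDual) : Prop :=
  ∃ P : ℕ → Polynomial ℂ, (∀ n, (P n).Monic ∧ (P n).natDegree = n) ∧
    (∀ m n, m ≠ n → u (P m * P n) = 0) ∧ (∀ n, u (P n ^ 2) ≠ 0)

/-- `P` is the monic OPS with respect to `u`. -/
def IsMonicOPS (u : PDual) (P : ℕ → Polynomial ℂ) : Prop :=
  (∀ n, (P n).Monic ∧ (P n).natDegree = n) ∧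
    (∀ m n, m ≠ n → u (P m * P n) = 0) ∧ (∀ n, u (P n ^ 2) ≠ 0)

/-- Continuous case: `d_n = d + a·n`. -/
def ddC (a d : ℂ) (n : ℕ) : ℂ := d + a * n

/-- Continuous case: `e_n = e + b·n`. -/
def eeC (b e : ℂ) (n : ℕ) : ℂ := e + b * n

/-- Continuous case: `β_n = n·e_{n-1}/d_{2n-2} - (n+1)·e_n/d_{2n}`. -/
def betaC (a b d e : ℂ) (n : ℕ) : ℂ :=
  n * eeC b e (n - 1) / ddC a d (2 * n - 2) - (n + 1) * eeC b e n / ddC a d (2 * n)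

/-- Continuous case: `γ_{n+1} = -((n+1)·d_{n-1}/(d_{2n-1}·d_{2n+1}))·φ(-e_n/d_{2n})`. -/
def gammaC (a b d e : ℂ) (φ : Polynomial ℂ) (n : ℕ) : ℂ :=
  -((n + 1) * ddC a d (n - 1) / (ddC a d (2 * n - 1) * ddC a d (2 * n + 1))) *
    φ.eval (-(eeC b e n) / ddC a d (2 * n))

/-- `d_n = d·q^n + a·[n]_q`. -/
def ddQ (q a d : ℂ) (n : ℕ) : ℂ := d * q ^ n + a * qBracket q n

/-- `e_n = e·q^n + (ω·d_n + b)·[n]_q`. -/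
def eeQ (q ω a b d e : ℂ) (n : ℕ) : ℂ :=
  e * q ^ n + (ω * ddQ q a d n + b) * qBracket q n

/-- `β_n = ω[n]_q + [n]_q·e_{n-1}/d_{2n-2} - [n+1]_q·e_n/d_{2n}`. -/
def betaQ (q ω a b d e : ℂ) (n : ℕ) : ℂ :=
  ω * qBracket q n + qBracket q n * eeQ q ω a b d e (n - 1) / ddQ q a d (2 * n - 2)
    - qBracket q (n + 1) * eeQ q ω a b d e n / ddQ q a d (2 * n)

/-- `γ_{n+1} = -(q^n·[n+1]_q·d_{n-1}/(d_{2n-1}·d_{2n+1}))·φ(-e_n/d_{2n})`. -/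
def gammaQ (q ω a b d e : ℂ) (φ : Polynomial ℂ) (n : ℕ) : ℂ :=
  -(q ^ n * qBracket q (n + 1) * ddQ q a d (n - 1) /
      (ddQ q a d (2 * n - 1) * ddQ q a d (2 * n + 1))) *
    φ.eval (-(eeQ q ω a b d e n) / ddQ q a d (2 * n))

/-- `Φ(x;n) = ∏_{j=1}^n φ(q^j x + ω[j]_q)`. -/
def PhiQ (q ω : ℂ) (φ : Polynomial ℂ) (n : ℕ) : Polynomial ℂ :=
  ∏ j ∈ Finset.range n, φ.comp (C (q ^ (j + 1)) * X + C (ω * qBracket q (j + 1)))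

/-- `k_n = q^{n(n-3)/2}·∏_{j=0}^{n-1} d_{n+j-1}⁻¹`. -/
def kQ (q a d : ℂ) (n : ℕ) : ℂ :=
  q ^ (((n : ℤ) * ((n : ℤ) - 3)) / 2) * ∏ j ∈ Finset.range n, (ddQ q a d (n + j - 1))⁻¹

section AuxProofs

variable {a b c d e : ℂ} {φ ψ : Polynomial ℂ} {u : PDual}

lemma u_C_mul (u : PDual) (r : ℂ) (p : Polynomial ℂ) : u (C r * p) = r * u p := by
  rw [← smul_eq_C_mul, map_smul, smul_eq_mul]

lemma pearson_pair (heq : dDeriv (pMul φ u) = pMul ψ u) (f : Polynomial ℂ) :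
    u (φ * derivative f + ψ * f) = 0 := by
  have h := LinearMap.congr_fun heq f
  simp only [dDeriv, pMul, LinearMap.neg_apply, LinearMap.comp_apply,
    LinearMap.mulLeft_apply] at h
  rw [map_add]
  linear_combination -h

lemma phi_mul_deriv_pow (φ : Polynomial ℂ) (n : ℕ) :
    φ * derivative (φ ^ n) = C (n : ℂ) * derivative φ * φ ^ n := by
  cases n with
  | zero => simp
  | succ n =>
    rw [derivative_pow_succ]
    push_cast
    ring

/-- The Rodrigues-type polynomial sequence. -/
def Qseq (φ ψ : Polynomial ℂ) (n : ℕ) : ℕ → Polynomial ℂ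
  | 0 => 1
  | k + 1 =>
    φ * derivative (Qseq φ ψ n k) +
      (ψ + C ((n - (k + 1) : ℕ) : ℂ) * derivative φ) * Qseq φ ψ n k

/-- Leading coefficient of `Qseq n n`. -/
def lam (a d : ℂ) (n : ℕ) : ℂ := ∏ i ∈ Finset.range n, ddC a d (2 * n - 2 - i)

lemma pearson_step (heq : dDeriv (pMul φ u) = pMul ψ u) (Q g : Polynomial ℂ) (m : ℕ) :
    u ((φ * derivative Q + (ψ + C (m : ℂ) * derivative φ) * Q) * φ ^ m * g)
      + u (Q * φ ^ (m + 1) * derivative g) = 0 := by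
  have h := pearson_pair heq (Q * φ ^ m * g)
  have hid : φ * derivative (Q * φ ^ m * g) + ψ * (Q * φ ^ m * g)
      = (φ * derivative Q + (ψ + C (m : ℂ) * derivative φ) * Q) * φ ^ m * g
        + Q * φ ^ (m + 1) * derivative g := by
    rw [derivative_mul, derivative_mul]
    linear_combination (Q * g) * phi_mul_deriv_pow φ m
  rw [hid, map_add] at h
  exact h

lemma key (heq : dDeriv (pMul φ u) = pMul ψ u) :
    ∀ k n, k ≤ n → ∀ g : Polynomial ℂ,
      u (Qseq φ ψ n k * φ ^ (n - k) * g)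
        = (-1 : ℂ) ^ k * u (φ ^ n * derivative^[k] g) := by
  intro k
  induction k with
  | zero => intro n _ g; simp [Qseq]
  | succ k ih =>
    intro n hk g
    have hk' : k ≤ n := le_of_lt (Nat.lt_of_succ_le hk)
    have hs := pearson_step (u := u) heq (Qseq φ ψ n k) g (n - (k + 1))
    have h1 : n - (k + 1) + 1 = n - k := by omega
    rw [h1] at hs
    have h2 : derivative^[k + 1] g = derivative^[k] (derivative g) :=
      Function.iterate_succ_apply _ _ _
    have h3 := ih n hk' (derivative g)
    rw [h2]
    simp only [Qseq]
    linear_combination hs - h3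

lemma Qseq_natDegree_le (hφd : φ.natDegree ≤ 2) (hψd : ψ.natDegree ≤ 1) (n k : ℕ) :
    (Qseq φ ψ n k).natDegree ≤ k := by
  induction k with
  | zero => simp [Qseq]
  | succ k ih =>
    have hdφ : (derivative φ).natDegree ≤ 1 :=
      le_trans (natDegree_derivative_le _) (by omega)
    have hdQ : (derivative (Qseq φ ψ n k)).natDegree ≤ k - 1 :=
      le_trans (natDegree_derivative_le _) (Nat.sub_le_sub_right ih 1)
    have h1 : (φ * derivative (Qseq φ ψ n k)).natDegree ≤ k + 1 := by
      rcases Nat.eq_zero_or_pos k with rfl | hk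
      · have h0 : (Qseq φ ψ n 0) = 1 := rfl
        simp [h0]
      · exact le_trans natDegree_mul_le (by omega)
    have hL : (ψ + C ((n - (k + 1) : ℕ) : ℂ) * derivative φ).natDegree ≤ 1 := by
      refine le_trans (natDegree_add_le _ _) ?_
      have := le_trans (natDegree_C_mul_le ((n - (k + 1) : ℕ) : ℂ) (derivative φ)) hdφ
      omega
    have h2 : ((ψ + C ((n - (k + 1) : ℕ) : ℂ) * derivative φ) * Qseq φ ψ n k).natDegree
        ≤ k + 1 := le_trans natDegree_mul_le (by omega)
    simp only [Qseq]
    exact le_trans (natDegree_add_le _ _) (by omega)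

end AuxProofs


section AuxProofs2

variable {a b c d e : ℂ} {φ ψ : Polynomial ℂ} {u : PDual}

lemma deriv_quad (a b c : ℂ) :
    derivative (C a * X ^ 2 + C b * X + C c) = C (2 * a) * X + C b := by
  simp [derivative_X_pow, C_mul]
  rw [show (C (2:ℂ) : Polynomial ℂ) = 2 from map_ofNat C 2]
  ring

lemma linId (hφ : φ = C a * X ^ 2 + C b * X + C c) (hψ : ψ = C d * X + C e) (n : ℕ) :
    C ((n : ℕ) : ℂ) * derivative φ + ψ = C (ddC a d (2 * n)) * X + C (eeC b e n) := by
  have h2 : ddC a d (2 * n) = d + 2 * a * (n : ℂ) := by simp only [ddC]; push_cast; ring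
  have h3 : eeC b e n = e + b * (n : ℂ) := rfl
  rw [hφ, hψ, deriv_quad, h2, h3]
  simp only [C_add, C_mul]
  ring

lemma relA (hφ : φ = C a * X ^ 2 + C b * X + C c) (hψ : ψ = C d * X + C e)
    (heq : dDeriv (pMul φ u) = pMul ψ u) (n : ℕ) :
    ddC a d (2 * n) * u (X * φ ^ n) + eeC b e n * u (φ ^ n) = 0 := by
  have h := pearson_pair heq (φ ^ n)
  have hid : φ * derivative (φ ^ n) + ψ * φ ^ n
      = C (ddC a d (2 * n)) * (X * φ ^ n) + C (eeC b e n) * φ ^ n := by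
    linear_combination phi_mul_deriv_pow φ n + (φ ^ n) * linId hφ hψ n
  rw [hid, map_add, u_C_mul, u_C_mul] at h
  exact h

lemma relB (hφ : φ = C a * X ^ 2 + C b * X + C c) (hψ : ψ = C d * X + C e)
    (heq : dDeriv (pMul φ u) = pMul ψ u) (n : ℕ) :
    ddC a d (2 * n) * u (X ^ 2 * φ ^ n) + eeC b e n * u (X * φ ^ n) + u (φ ^ (n + 1)) = 0 := by
  have h := pearson_pair heq (X * φ ^ n)
  have hid : φ * derivative (X * φ ^ n) + ψ * (X * φ ^ n)
      = C (ddC a d (2 * n)) * (X ^ 2 * φ ^ n) + C (eeC b e n) * (X * φ ^ n) + φ ^ (n + 1) := by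
    rw [derivative_mul, derivative_X]
    linear_combination X * phi_mul_deriv_pow φ n + (X * φ ^ n) * linId hφ hψ n
  rw [hid, map_add, map_add, u_C_mul, u_C_mul] at h
  linear_combination h

lemma relC (hφ : φ = C a * X ^ 2 + C b * X + C c) (n : ℕ) :
    u (φ ^ (n + 1)) = a * u (X ^ 2 * φ ^ n) + b * u (X * φ ^ n) + c * u (φ ^ n) := by
  have hid : φ ^ (n + 1) = C a * (X ^ 2 * φ ^ n) + C b * (X * φ ^ n) + C c * φ ^ n := by
    rw [pow_succ, hφ]; ring
  have h := congrArg u hid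
  rw [map_add, map_add, u_C_mul, u_C_mul, u_C_mul] at h
  exact h

lemma relStar (hφ : φ = C a * X ^ 2 + C b * X + C c) (hψ : ψ = C d * X + C e)
    (heq : dDeriv (pMul φ u) = pMul ψ u) (n : ℕ) :
    ddC a d (2 * n) * ddC a d (2 * n + 1) * u (φ ^ (n + 1))
      = (a * (eeC b e n) ^ 2 - b * eeC b e n * ddC a d (2 * n)
          + c * (ddC a d (2 * n)) ^ 2) * u (φ ^ n) := by
  have h1 := relA hφ hψ heq n
  have h2 := relB hφ hψ heq n
  have h3 := relC (u := u) hφ n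
  have hdd : ddC a d (2 * n + 1) = ddC a d (2 * n) + a := by
    simp only [ddC]; push_cast; ring
  rw [hdd]
  linear_combination (ddC a d (2 * n)) ^ 2 * h3 + (a * ddC a d (2 * n)) * h2
    + (ddC a d (2 * n) * b - a * eeC b e n) * h1

lemma eval_ne_iff (hφ : φ = C a * X ^ 2 + C b * X + C c) {D E : ℂ} (hD : D ≠ 0) :
    φ.eval (-E / D) ≠ 0 ↔ a * E ^ 2 - b * E * D + c * D ^ 2 ≠ 0 := by
  have hD2 : (D ^ 2 : ℂ) ≠ 0 := pow_ne_zero _ hD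
  have hev : φ.eval (-E / D) = (a * E ^ 2 - b * E * D + c * D ^ 2) / D ^ 2 := by
    rw [hφ]
    simp only [eval_add, eval_mul, eval_pow, eval_C, eval_X]
    field_simp
    ring
  rw [hev, div_ne_zero_iff]
  exact ⟨fun h => h.1, fun h => ⟨h, hD2⟩⟩

lemma moment0 (hψ : ψ = C d * X + C e) (heq : dDeriv (pMul φ u) = pMul ψ u) :
    d * u X + e * u 1 = 0 := by
  have h := pearson_pair heq 1
  rw [derivative_one, mul_zero, zero_add, mul_one, hψ, map_add, u_C_mul] at h
  rw [show (C e : Polynomial ℂ) = C e * 1 from (mul_one _).symm, u_C_mul] at h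
  exact h

lemma moment_rec (hφ : φ = C a * X ^ 2 + C b * X + C c) (hψ : ψ = C d * X + C e)
    (heq : dDeriv (pMul φ u) = pMul ψ u) (n : ℕ) :
    ddC a d (n + 1) * u (X ^ (n + 2)) + eeC b e (n + 1) * u (X ^ (n + 1))
      + c * ((n : ℂ) + 1) * u (X ^ n) = 0 := by
  have h := pearson_pair heq (X ^ (n + 1))
  have hid : φ * derivative (X ^ (n + 1)) + ψ * X ^ (n + 1)
      = C (ddC a d (n + 1)) * X ^ (n + 2) + C (eeC b e (n + 1)) * X ^ (n + 1)
        + C (c * ((n : ℂ) + 1)) * X ^ n := by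
    rw [derivative_X_pow, hφ, hψ, Nat.add_sub_cancel]
    have e2 : (((n + 1 : ℕ)) : ℂ) = (n : ℂ) + 1 := by push_cast; ring
    have h2 : ddC a d (n + 1) = d + a * ((n : ℂ) + 1) := by simp only [ddC]; push_cast; ring
    have h3 : eeC b e (n + 1) = e + b * ((n : ℂ) + 1) := by simp only [eeC]; push_cast; ring
    rw [e2, h2, h3]
    simp only [C_add, C_mul]
    ring
  rw [hid, map_add, map_add, u_C_mul, u_C_mul, u_C_mul] at h
  exact h

lemma iter_deriv_const :
    ∀ (n : ℕ) (p : Polynomial ℂ), p.natDegree ≤ n →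
      derivative^[n] p = C ((n.factorial : ℂ) * p.coeff n) := by
  intro n
  induction n with
  | zero =>
    intro p h
    simpa using eq_C_of_natDegree_le_zero h
  | succ n ih =>
    intro p h
    rw [Function.iterate_succ_apply,
      ih (derivative p) (le_trans (natDegree_derivative_le p) (by omega))]
    congr 1
    rw [coeff_derivative, Nat.factorial_succ]
    push_cast
    ring

lemma exists_antideriv (g : Polynomial ℂ) : ∃ h : Polynomial ℂ, derivative h = g := by
  refine ⟨∑ i ∈ Finset.range (g.natDegree + 1), C (g.coeff i / ((i : ℂ) + 1)) * X ^ (i + 1), ?_⟩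
  rw [map_sum]
  conv_rhs => rw [g.as_sum_range_C_mul_X_pow]
  refine Finset.sum_congr rfl fun i _ => ?_
  rw [derivative_C_mul, derivative_X_pow, Nat.add_sub_cancel]
  have hne : ((i : ℂ) + 1) ≠ 0 := by
    have : (((i + 1 : ℕ)) : ℂ) ≠ 0 := Nat.cast_ne_zero.mpr (Nat.succ_ne_zero i)
    simpa using this
  rw [← mul_assoc, ← C_mul]
  congr 2
  push_cast
  field_simp

end AuxProofs2


section AuxProofs3

variable {a b c d e : ℂ} {φ ψ : Polynomial ℂ} {u : PDual}

lemma Qseq_coeff (hφ : φ = C a * X ^ 2 + C b * X + C c) (hψ : ψ = C d * X + C e)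
    {n : ℕ} : ∀ k, k ≤ n →
      (Qseq φ ψ n k).coeff k = ∏ i ∈ Finset.range k, ddC a d (2 * n - 2 - i) := by
  have hφd : φ.natDegree ≤ 2 := by rw [hφ]; exact natDegree_quadratic_le
  have hψd : ψ.natDegree ≤ 1 := by rw [hψ]; exact natDegree_linear_le
  intro k
  induction k with
  | zero => intro _; simp [Qseq]
  | succ k ih =>
    intro hk
    have hk' : k ≤ n := by omega
    set Q := Qseq φ ψ n k with hQdef
    have hQd : Q.natDegree ≤ k := Qseq_natDegree_le hφd hψd n k
    have hc1 : Q.coeff (k + 1) = 0 := coeff_eq_zero_of_natDegree_lt (by omega)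
    have hc2 : Q.coeff (k + 2) = 0 := coeff_eq_zero_of_natDegree_lt (by omega)
    have hder1 : (derivative Q).coeff k = 0 := by rw [coeff_derivative, hc1, zero_mul]
    have hder2 : (derivative Q).coeff (k + 1) = 0 := by rw [coeff_derivative, hc2, zero_mul]
    have hA1 : (φ * derivative Q).coeff (k + 1) = a * (k : ℂ) * Q.coeff k := by
      have hsplit : φ * derivative Q
          = C a * (derivative Q * X ^ 2) + C b * (derivative Q * X ^ 1)
            + C c * derivative Q := by rw [hφ]; ring
      rw [hsplit, coeff_add, coeff_add, coeff_C_mul, coeff_C_mul, coeff_C_mul,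
        coeff_mul_X_pow', coeff_mul_X_pow']
      rcases Nat.eq_zero_or_pos k with rfl | hkpos
      · norm_num [hder1, hder2]
      · rw [if_pos (by omega : 2 ≤ k + 1), if_pos (by omega : 1 ≤ k + 1)]
        have e1 : k + 1 - 1 = k := by omega
        have e2 : k + 1 - 2 = k - 1 := by omega
        rw [e1, e2, hder1, hder2, coeff_derivative]
        have e3 : k - 1 + 1 = k := by omega
        rw [e3]
        have e4 : ((k - 1 : ℕ) : ℂ) + 1 = (k : ℂ) := by
          rw [Nat.cast_sub (by omega : 1 ≤ k)]; push_cast; ring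
        rw [e4]
        ring
    have hA2 : ((ψ + C ((n - (k + 1) : ℕ) : ℂ) * derivative φ) * Q).coeff (k + 1)
        = (d + ((n - (k + 1) : ℕ) : ℂ) * (2 * a)) * Q.coeff k := by
      have hsplit : (ψ + C ((n - (k + 1) : ℕ) : ℂ) * derivative φ) * Q
          = C (d + ((n - (k + 1) : ℕ) : ℂ) * (2 * a)) * (Q * X ^ 1)
            + C (e + ((n - (k + 1) : ℕ) : ℂ) * b) * Q := by
        rw [hψ, hφ, deriv_quad]
        simp only [C_add, C_mul]
        ring
      rw [hsplit, coeff_add, coeff_C_mul, coeff_C_mul, coeff_mul_X_pow',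
        if_pos (by omega : 1 ≤ k + 1)]
      have e1 : k + 1 - 1 = k := by omega
      rw [e1, hc1, mul_zero, add_zero]
    have hcast : (((2 * n - 2 - k : ℕ)) : ℂ) = 2 * (n : ℂ) - 2 - k := by
      rw [Nat.cast_sub (by omega : k ≤ 2 * n - 2), Nat.cast_sub (by omega : 2 ≤ 2 * n)]
      push_cast; ring
    have hcast2 : (((n - (k + 1) : ℕ)) : ℂ) = (n : ℂ) - k - 1 := by
      rw [Nat.cast_sub (by omega : k + 1 ≤ n)]; push_cast; ring
    simp only [Qseq]
    rw [← hQdef, coeff_add, hA1, hA2, ih hk', Finset.prod_range_succ]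
    simp only [ddC, hcast, hcast2]
    ring

end AuxProofs3


section AuxProofs4

variable {u : PDual} {P : ℕ → Polynomial ℂ}

lemma P_zero (hdeg : ∀ n, (P n).Monic ∧ (P n).natDegree = n) : P 0 = 1 :=
  (hdeg 0).1.natDegree_eq_zero.mp (hdeg 0).2

lemma P_coeff_self (hdeg : ∀ n, (P n).Monic ∧ (P n).natDegree = n) (n : ℕ) :
    (P n).coeff n = 1 := by
  have := (hdeg n).1.coeff_natDegree
  rwa [(hdeg n).2] at this

lemma rep (hdeg : ∀ n, (P n).Monic ∧ (P n).natDegree = n) :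
    ∀ N (f : Polynomial ℂ), f.natDegree ≤ N →
      ∃ cs : ℕ → ℂ, f = ∑ j ∈ Finset.range (N + 1), C (cs j) * P j := by
  intro N
  induction N with
  | zero =>
    intro f hf
    refine ⟨fun _ => f.coeff 0, ?_⟩
    rw [Finset.sum_range_one, P_zero hdeg, mul_one]
    exact eq_C_of_natDegree_le_zero hf
  | succ N ih =>
    intro f hf
    have hgd : (f - C (f.coeff (N + 1)) * P (N + 1)).natDegree ≤ N := by
      rw [natDegree_le_iff_coeff_eq_zero]
      intro M hM
      rcases Nat.lt_or_ge M (N + 2) with h | h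
      · have hM1 : M = N + 1 := by omega
        subst hM1
        simp [coeff_sub, coeff_C_mul, P_coeff_self hdeg]
      · have h1 : f.coeff M = 0 := coeff_eq_zero_of_natDegree_lt (by omega)
        have h2 : (P (N + 1)).coeff M = 0 :=
          coeff_eq_zero_of_natDegree_lt (by rw [(hdeg (N + 1)).2]; omega)
        simp [coeff_sub, coeff_C_mul, h1, h2]
    obtain ⟨cs, hcs⟩ := ih _ hgd
    refine ⟨Function.update cs (N + 1) (f.coeff (N + 1)), ?_⟩
    rw [Finset.sum_range_succ, Function.update_self]
    have hsum : ∑ j ∈ Finset.range (N + 1),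
        C (Function.update cs (N + 1) (f.coeff (N + 1)) j) * P j
        = ∑ j ∈ Finset.range (N + 1), C (cs j) * P j := by
      refine Finset.sum_congr rfl fun j hj => ?_
      have : j ≠ N + 1 := by have := Finset.mem_range.mp hj; omega
      rw [Function.update_of_ne this]
    rw [hsum, ← hcs]
    ring

lemma orthF (hdeg : ∀ n, (P n).Monic ∧ (P n).natDegree = n)
    (horth : ∀ m n, m ≠ n → u (P m * P n) = 0) :
    ∀ n (f : Polynomial ℂ), (∀ j, n ≤ j → f.coeff j = 0) → u (f * P n) = 0 := by
  intro n f hcf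
  cases n with
  | zero =>
    have hf0 : f = 0 := Polynomial.ext fun i => by simpa using hcf i (Nat.zero_le i)
    simp [hf0]
  | succ N =>
    have hfd : f.natDegree ≤ N :=
      natDegree_le_iff_coeff_eq_zero.mpr fun M hM => hcf M (by omega)
    obtain ⟨cs, hcs⟩ := rep hdeg N f hfd
    rw [hcs, Finset.sum_mul, map_sum]
    refine Finset.sum_eq_zero fun j hj => ?_
    have hjn : j ≠ N + 1 := by have := Finset.mem_range.mp hj; omega
    rw [mul_assoc, u_C_mul, horth j (N + 1) hjn, mul_zero]

lemma sq_eq_Xn (hdeg : ∀ n, (P n).Monic ∧ (P n).natDegree = n)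
    (horth : ∀ m n, m ≠ n → u (P m * P n) = 0) (n : ℕ) :
    u (P n ^ 2) = u (X ^ n * P n) := by
  have hsplit : P n ^ 2 = X ^ n * P n + (P n - X ^ n) * P n := by ring
  have hz : u ((P n - X ^ n) * P n) = 0 := by
    apply orthF hdeg horth
    intro j hj
    rw [coeff_sub, coeff_X_pow]
    rcases eq_or_lt_of_le hj with h | h
    · rw [if_pos h.symm, ← h, P_coeff_self hdeg, sub_self]
    · rw [if_neg (by omega), coeff_eq_zero_of_natDegree_lt (by rw [(hdeg n).2]; omega),
        sub_zero]
  rw [hsplit, map_add, hz, add_zero]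

lemma uniqueMul (hdeg : ∀ n, (P n).Monic ∧ (P n).natDegree = n)
    (horth : ∀ m n, m ≠ n → u (P m * P n) = 0)
    (hsq : ∀ n, u (P n ^ 2) ≠ 0) :
    ∀ n (Q : Polynomial ℂ), Q.natDegree ≤ n → (∀ m, m < n → u (X ^ m * Q) = 0) →
      Q = C (Q.coeff n) * P n := by
  intro n Q hQd hQm
  have hRc : ∀ j, n ≤ j → (Q - C (Q.coeff n) * P n).coeff j = 0 := by
    intro j hj
    rcases eq_or_lt_of_le hj with h | h
    · rw [coeff_sub, coeff_C_mul, ← h, P_coeff_self hdeg, mul_one, sub_self]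
    · have hp : (P n).coeff j = 0 := coeff_eq_zero_of_natDegree_lt (by rw [(hdeg n).2]; omega)
      have hq : Q.coeff j = 0 := coeff_eq_zero_of_natDegree_lt (by omega)
      rw [coeff_sub, coeff_C_mul, hp, hq, mul_zero, sub_zero]
  have hRm : ∀ g : Polynomial ℂ, g.natDegree < n → u (g * (Q - C (Q.coeff n) * P n)) = 0 := by
    intro g hg
    conv_lhs => rw [g.as_sum_range_C_mul_X_pow]
    rw [Finset.sum_mul, map_sum]
    refine Finset.sum_eq_zero fun i hi => ?_
    have hi' : i < n := by have := Finset.mem_range.mp hi; omega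
    have h0 : u (X ^ i * Q) = 0 := hQm i hi'
    have h1 : u (X ^ i * P n) = 0 := by
      apply orthF hdeg horth
      intro j hj
      rw [coeff_X_pow, if_neg (by omega)]
    have h2 : u (X ^ i * (Q - C (Q.coeff n) * P n)) = 0 := by
      have hid : X ^ i * (Q - C (Q.coeff n) * P n)
          = X ^ i * Q - C (Q.coeff n) * (X ^ i * P n) := by ring
      rw [hid, map_sub, u_C_mul, h0, h1, mul_zero, sub_zero]
    rw [mul_assoc, u_C_mul, h2, mul_zero]
  have hR0 : Q - C (Q.coeff n) * P n = 0 := by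
    rcases Nat.eq_zero_or_pos n with rfl | hn
    · exact Polynomial.ext fun i => by simpa using hRc i (Nat.zero_le i)
    · obtain ⟨N, rfl⟩ : ∃ N, n = N + 1 := ⟨n - 1, by omega⟩
      have hRd : (Q - C (Q.coeff (N + 1)) * P (N + 1)).natDegree ≤ N :=
        natDegree_le_iff_coeff_eq_zero.mpr fun M hM => hRc M (by omega)
      obtain ⟨cs, hcs⟩ := rep hdeg N _ hRd
      have hcz : ∀ k ∈ Finset.range (N + 1), cs k = 0 := by
        intro k hk
        have hk' : k < N + 1 := Finset.mem_range.mp hk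
        have h1 : u (P k * (Q - C (Q.coeff (N + 1)) * P (N + 1))) = 0 :=
          hRm (P k) (by rw [(hdeg k).2]; omega)
        have h2 : u (P k * (Q - C (Q.coeff (N + 1)) * P (N + 1))) = cs k * u (P k ^ 2) := by
          rw [hcs, Finset.mul_sum, map_sum, Finset.sum_eq_single k]
          · rw [show P k * (C (cs k) * P k) = C (cs k) * (P k * P k) from by ring, u_C_mul,
              ← pow_two]
          · intro j hj hjk
            rw [show P k * (C (cs j) * P j) = C (cs j) * (P k * P j) from by ring, u_C_mul,
              horth k j (Ne.symm hjk), mul_zero]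
          · intro hnot
            exact absurd hk hnot
        rw [h1] at h2
        exact ((mul_eq_zero.mp h2.symm).resolve_right (hsq k))
      rw [hcs]
      exact Finset.sum_eq_zero fun j hj => by rw [hcz j hj, C_0, zero_mul]
  have := sub_eq_zero.mp hR0
  exact this

end AuxProofs4


section MainLemmas

variable {a b c d e : ℂ} {φ ψ : Polynomial ℂ} {u : PDual}

lemma sufficiency (hφ : φ = C a * X ^ 2 + C b * X + C c) (hψ : ψ = C d * X + C e)
    (hu : u ≠ 0) (heq : dDeriv (pMul φ u) = pMul ψ u)
    (hcond : ∀ n : ℕ, ddC a d n ≠ 0 ∧ φ.eval (-(eeC b e n) / ddC a d (2 * n)) ≠ 0) :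
    IsRegularFunc u := by
  have hφd : φ.natDegree ≤ 2 := by rw [hφ]; exact natDegree_quadratic_le
  have hψd : ψ.natDegree ≤ 1 := by rw [hψ]; exact natDegree_linear_le
  -- Step 1 : u 1 ≠ 0
  have h0 : u 1 ≠ 0 := by
    intro h1
    apply hu
    have hmono : ∀ n : ℕ, u (X ^ n) = 0 := by
      intro n
      induction n using Nat.strong_induction_on with
      | _ n ih =>
        rcases n with _ | n
        · simpa using h1
        rcases n with _ | n
        · have h := moment0 (u := u) hψ heq
          have hd0 : d ≠ 0 := by
            have h' := (hcond 0).1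
            simpa [ddC] using h'
          have hz : d * u X = 0 := by
            rw [h1, mul_zero, add_zero] at h
            exact h
          have := (mul_eq_zero.mp hz).resolve_left hd0
          simpa using this
        · have h := moment_rec (u := u) hφ hψ heq n
          rw [ih (n + 1) (by omega), ih n (by omega), mul_zero, mul_zero, add_zero,
            add_zero] at h
          have hdm : ddC a d (n + 1) ≠ 0 := (hcond (n + 1)).1
          exact (mul_eq_zero.mp h).resolve_left hdm
    apply LinearMap.ext
    intro f
    conv_lhs => rw [f.as_sum_range_C_mul_X_pow]
    rw [map_sum]
    simp only [LinearMap.zero_apply]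
    exact Finset.sum_eq_zero fun i _ => by rw [u_C_mul, hmono, mul_zero]
  -- Step 2 : u (φ^n) ≠ 0
  have tpos : ∀ n, u (φ ^ n) ≠ 0 := by
    intro n
    induction n with
    | zero => simpa using h0
    | succ n ih =>
      have hst := relStar (u := u) hφ hψ heq n
      have hE : a * (eeC b e n) ^ 2 - b * eeC b e n * ddC a d (2 * n)
          + c * (ddC a d (2 * n)) ^ 2 ≠ 0 :=
        (eval_ne_iff hφ (hcond (2 * n)).1).mp (hcond n).2
      intro h
      rw [h, mul_zero] at hst
      exact (mul_ne_zero hE ih) hst.symm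
  have lam_ne : ∀ n, lam a d n ≠ 0 := fun n =>
    Finset.prod_ne_zero_iff.mpr fun i _ => (hcond _).1
  -- the OPS
  refine ⟨fun n => C (lam a d n)⁻¹ * Qseq φ ψ n n, fun n => ?_, ?_, fun n => ?_⟩
  · -- monic and degree
    have hQd : (Qseq φ ψ n n).natDegree ≤ n := Qseq_natDegree_le hφd hψd n n
    have hQc : (Qseq φ ψ n n).coeff n = lam a d n := Qseq_coeff hφ hψ n le_rfl
    have hcn : (C (lam a d n)⁻¹ * Qseq φ ψ n n).coeff n = 1 := by
      rw [coeff_C_mul, hQc, inv_mul_cancel₀ (lam_ne n)]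
    have hdeq : (C (lam a d n)⁻¹ * Qseq φ ψ n n).natDegree = n :=
      le_antisymm (le_trans (natDegree_C_mul_le _ _) hQd)
        (le_natDegree_of_ne_zero (by rw [hcn]; exact one_ne_zero))
    refine ⟨?_, hdeq⟩
    show (C (lam a d n)⁻¹ * Qseq φ ψ n n).leadingCoeff = 1
    rw [leadingCoeff, hdeq, hcn]
  · -- orthogonality
    have main : ∀ m n : ℕ, m < n →
        u ((C (lam a d m)⁻¹ * Qseq φ ψ m m) * (C (lam a d n)⁻¹ * Qseq φ ψ n n)) = 0 := by
      intro m n hmn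
      have hk := key heq n n le_rfl (C (lam a d m)⁻¹ * Qseq φ ψ m m)
      rw [Nat.sub_self, pow_zero, mul_one] at hk
      have hz : derivative^[n] (C (lam a d m)⁻¹ * Qseq φ ψ m m) = 0 :=
        iterate_derivative_eq_zero
          (lt_of_le_of_lt (le_trans (natDegree_C_mul_le _ _) (Qseq_natDegree_le hφd hψd m m))
            hmn)
      rw [hz, mul_zero, map_zero, mul_zero] at hk
      have hid : (C (lam a d m)⁻¹ * Qseq φ ψ m m) * (C (lam a d n)⁻¹ * Qseq φ ψ n n)
          = C (lam a d n)⁻¹ * (Qseq φ ψ n n * (C (lam a d m)⁻¹ * Qseq φ ψ m m)) := by ring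
      rw [hid, u_C_mul, hk, mul_zero]
    intro m n hmn
    rcases lt_or_gt_of_ne hmn with h | h
    · exact main m n h
    · rw [mul_comm]; exact main n m h
  · -- square nonzero
    have hk := key heq n n le_rfl (Qseq φ ψ n n)
    rw [Nat.sub_self, pow_zero, mul_one] at hk
    have hQd : (Qseq φ ψ n n).natDegree ≤ n := Qseq_natDegree_le hφd hψd n n
    have hQc : (Qseq φ ψ n n).coeff n = lam a d n := Qseq_coeff hφ hψ n le_rfl
    rw [iter_deriv_const n _ hQd, hQc] at hk
    have h2 : u (φ ^ n * C ((n.factorial : ℂ) * lam a d n))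
        = (n.factorial : ℂ) * lam a d n * u (φ ^ n) := by
      rw [mul_comm (φ ^ n), u_C_mul]
    rw [h2] at hk
    have hsq : (C (lam a d n)⁻¹ * Qseq φ ψ n n) ^ 2
        = C ((lam a d n)⁻¹ * (lam a d n)⁻¹) * (Qseq φ ψ n n * Qseq φ ψ n n) := by
      rw [C_mul]; ring
    rw [hsq, u_C_mul, hk]
    refine mul_ne_zero (mul_ne_zero (inv_ne_zero (lam_ne n)) (inv_ne_zero (lam_ne n)))
      (mul_ne_zero (pow_ne_zero _ (by norm_num))
        (mul_ne_zero (mul_ne_zero (Nat.cast_ne_zero.mpr n.factorial_ne_zero) (lam_ne n))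
          (tpos n)))

end MainLemmas


section MainLemmas2

variable {a b c d e : ℂ} {φ ψ : Polynomial ℂ} {u : PDual}

lemma necessity (hφ : φ = C a * X ^ 2 + C b * X + C c) (hψ : ψ = C d * X + C e)
    (hne : φ ≠ 0 ∨ ψ ≠ 0) (heq : dDeriv (pMul φ u) = pMul ψ u)
    (hreg : IsRegularFunc u) :
    ∀ n : ℕ, ddC a d n ≠ 0 ∧ φ.eval (-(eeC b e n) / ddC a d (2 * n)) ≠ 0 := by
  obtain ⟨P, hdeg, horth, hsq⟩ := hreg
  have hφd : φ.natDegree ≤ 2 := by rw [hφ]; exact natDegree_quadratic_le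
  have hψd : ψ.natDegree ≤ 1 := by rw [hψ]; exact natDegree_linear_le
  have hdag : ∀ n : ℕ, lam a d n * u (X ^ n * P n)
      = (-1 : ℂ) ^ n * ((n.factorial : ℂ) * u (φ ^ n)) := by
    intro n
    have hQd : (Qseq φ ψ n n).natDegree ≤ n := Qseq_natDegree_le hφd hψd n n
    have hQc : (Qseq φ ψ n n).coeff n = lam a d n := Qseq_coeff hφ hψ n le_rfl
    have hQm : ∀ m, m < n → u (X ^ m * Qseq φ ψ n n) = 0 := by
      intro m hm
      have hk := key heq n n le_rfl (X ^ m)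
      rw [Nat.sub_self, pow_zero, mul_one] at hk
      rw [iterate_derivative_eq_zero (by rw [natDegree_X_pow]; exact hm), mul_zero, map_zero,
        mul_zero] at hk
      rw [mul_comm]
      exact hk
    have hQP : Qseq φ ψ n n = C (lam a d n) * P n := by
      have h := uniqueMul hdeg horth hsq n (Qseq φ ψ n n) hQd hQm
      rwa [hQc] at h
    have hk := key heq n n le_rfl (X ^ n)
    rw [Nat.sub_self, pow_zero, mul_one] at hk
    have hcx : (X ^ n : Polynomial ℂ).coeff n = 1 := by simp [coeff_X_pow]
    rw [iter_deriv_const n (X ^ n) (le_of_eq (natDegree_X_pow n)), hcx, mul_one] at hk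
    have h2 : u (φ ^ n * C ((n.factorial : ℂ))) = (n.factorial : ℂ) * u (φ ^ n) := by
      rw [mul_comm, u_C_mul]
    rw [h2] at hk
    have hid : Qseq φ ψ n n * X ^ n = C (lam a d n) * (X ^ n * P n) := by rw [hQP]; ring
    rw [hid, u_C_mul] at hk
    exact hk
  have hrn : ∀ n, u (X ^ n * P n) ≠ 0 := by
    intro n
    rw [← sq_eq_Xn hdeg horth n]
    exact hsq n
  have tlam : ∀ n, u (φ ^ n) = 0 ↔ lam a d n = 0 := by
    intro n
    constructor
    · intro h
      have hd := hdag n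
      rw [h, mul_zero, mul_zero] at hd
      exact (mul_eq_zero.mp hd).resolve_right (hrn n)
    · intro h
      have hd := hdag n
      rw [h, zero_mul] at hd
      rcases mul_eq_zero.mp hd.symm with h' | h'
      · exact absurd h' (pow_ne_zero _ (by norm_num))
      · rcases mul_eq_zero.mp h' with h'' | h''
        · exact absurd h'' (Nat.cast_ne_zero.mpr n.factorial_ne_zero)
        · exact h''
  have h00 : u (1 : Polynomial ℂ) ≠ 0 := by
    have h := hsq 0
    rwa [P_zero hdeg, one_pow] at h
  have htn : ∀ n, u (φ ^ n) ≠ 0 := by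
    intro n
    induction n using Nat.strong_induction_on with
    | _ n ih =>
      rcases n with _ | n
      · simpa using h00
      intro ht
      have hds : ∀ j : ℕ, j + 2 ≤ 2 * n → ddC a d j ≠ 0 := by
        intro j hj
        have hlamm : lam a d (min n (j + 1)) ≠ 0 := by
          intro h
          exact ih (min n (j + 1)) (by omega) ((tlam _).mpr h)
        have hmem : (2 * min n (j + 1) - 2 - j) ∈ Finset.range (min n (j + 1)) :=
          Finset.mem_range.mpr (by omega)
        have h := Finset.prod_ne_zero_iff.mp hlamm _ hmem
        rwa [show 2 * min n (j + 1) - 2 - (2 * min n (j + 1) - 2 - j) = j from by omega] at h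
      have hlam1 : lam a d (n + 1) = 0 := (tlam (n + 1)).mp ht
      obtain ⟨i0, hi0mem, hi0⟩ := Finset.prod_eq_zero_iff.mp hlam1
      have hi0lt : i0 < n + 1 := Finset.mem_range.mp hi0mem
      by_cases hD : ddC a d (2 * n) = 0
      · -- degenerate case : nφ' + ψ = 0
        have hAn := relA (u := u) hφ hψ heq n
        have hE : eeC b e n = 0 := by
          have hz : eeC b e n * u (φ ^ n) = 0 := by
            linear_combination hAn - u (X * φ ^ n) * hD
          exact (mul_eq_zero.mp hz).resolve_right (ih n (by omega))
        have hlin : C ((n : ℕ) : ℂ) * derivative φ + ψ = 0 := by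
          rw [linId hφ hψ n, hD, hE]
          simp
        by_cases hφ0 : φ = 0
        · have hψ0 : ψ = 0 := by
            have h := hlin
            rw [hφ0] at h
            simpa using h
          rcases hne with h | h
          exacts [h hφ0, h hψ0]
        · have hvan : ∀ g : Polynomial ℂ, u (φ ^ (n + 1) * g) = 0 := by
            intro g
            obtain ⟨hh, hhd⟩ := exists_antideriv g
            have hp := pearson_pair heq (φ ^ n * hh)
            have hid : φ * derivative (φ ^ n * hh) + ψ * (φ ^ n * hh)
                = (C ((n : ℕ) : ℂ) * derivative φ + ψ) * (φ ^ n * hh)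
                  + φ ^ (n + 1) * derivative hh := by
              rw [derivative_mul]
              linear_combination hh * phi_mul_deriv_pow φ n
            rw [hid, hlin, zero_mul, zero_add, hhd] at hp
            exact hp
          have hFne : φ ^ (n + 1) ≠ 0 := pow_ne_zero _ hφ0
          set K := (φ ^ (n + 1)).natDegree with hK
          obtain ⟨cs, hcs⟩ := rep hdeg K (φ ^ (n + 1)) (le_of_eq hK.symm)
          have hsum : ∑ j ∈ Finset.range (K + 1), cs j * (P j).coeff K = cs K := by
            rw [Finset.sum_eq_single_of_mem K (Finset.mem_range.mpr (by omega))
              (fun j hj hjK => by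
                rw [coeff_eq_zero_of_natDegree_lt (by
                  rw [(hdeg j).2]
                  have := Finset.mem_range.mp hj
                  omega), mul_zero])]
            rw [P_coeff_self hdeg, mul_one]
          have hco := congrArg (fun p => p.coeff K) hcs
          simp only [finset_sum_coeff, coeff_C_mul] at hco
          rw [hsum] at hco
          have hlc := leadingCoeff_ne_zero.mpr hFne
          rw [leadingCoeff, ← hK, hco] at hlc
          have hval : u (φ ^ (n + 1) * P K) = cs K * u (P K ^ 2) := by
            rw [hcs, Finset.sum_mul, map_sum,
              Finset.sum_eq_single_of_mem K (Finset.mem_range.mpr (by omega))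
                (fun j hj hjK => by rw [mul_assoc, u_C_mul, horth j K hjK, mul_zero])]
            rw [mul_assoc, u_C_mul, ← pow_two]
          have hcontra : u (φ ^ (n + 1) * P K) ≠ 0 := by
            rw [hval]
            exact mul_ne_zero hlc (hsq K)
          exact hcontra (hvan (P K))
      · -- Bessel-degenerate case
        have hj0ne : 2 * (n + 1) - 2 - i0 ≠ 2 * n := fun h => hD (h ▸ hi0)
        have hj0big : ¬(2 * (n + 1) - 2 - i0 + 2 ≤ 2 * n) := fun h => hds _ h hi0
        have hj0eq : 2 * (n + 1) - 2 - i0 = 2 * n - 1 := by omega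
        rw [hj0eq] at hi0
        have ha : a ≠ 0 := by
          intro ha0
          apply hD
          simp only [ddC, ha0, zero_mul, add_zero] at hi0 ⊢
          exact hi0
        have hdj : ∀ j : ℕ, j ≠ 2 * n - 1 → ddC a d j ≠ 0 := by
          intro j hj hzero
          simp only [ddC] at hzero hi0
          have hsub : a * ((j : ℂ) - ((2 * n - 1 : ℕ) : ℂ)) = 0 := by
            linear_combination hzero - hi0
          rcases mul_eq_zero.mp hsub with h | h
          · exact ha h
          · exact hj (Nat.cast_injective (sub_eq_zero.mp h))
        have hprop : ∀ k : ℕ, u (φ ^ (n + 1 + k)) = 0 := by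
          intro k
          induction k with
          | zero => simpa using ht
          | succ k ihk =>
            have hst := relStar (u := u) hφ hψ heq (n + 1 + k)
            rw [ihk, mul_zero] at hst
            have hD1 : ddC a d (2 * (n + 1 + k)) ≠ 0 := hdj _ (by omega)
            have hD2 : ddC a d (2 * (n + 1 + k) + 1) ≠ 0 := hdj _ (by omega)
            have hz : u (φ ^ (n + 1 + k + 1)) = 0 := by
              rcases mul_eq_zero.mp hst with h | h
              · rcases mul_eq_zero.mp h with h' | h'
                exacts [absurd h' hD1, absurd h' hD2]
              · exact h
            rwa [show n + 1 + k + 1 = n + 1 + (k + 1) from by omega] at hz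
        have h2n1 : u (φ ^ (2 * n + 1)) = 0 := by
          have h := hprop n
          rwa [show n + 1 + n = 2 * n + 1 from by omega] at h
        have hlam2 : lam a d (2 * n + 1) = 0 := (tlam _).mp h2n1
        obtain ⟨i1, hi1mem, hi1⟩ := Finset.prod_eq_zero_iff.mp hlam2
        have hi1lt := Finset.mem_range.mp hi1mem
        exact hdj _ (by omega) hi1
  have hdall : ∀ j : ℕ, ddC a d j ≠ 0 := by
    intro j
    have hlamj : lam a d (j + 1) ≠ 0 := fun h => htn (j + 1) ((tlam _).mpr h)
    have h := Finset.prod_ne_zero_iff.mp hlamj j (Finset.mem_range.mpr (by omega))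
    rwa [show 2 * (j + 1) - 2 - j = j from by omega] at h
  intro n
  refine ⟨hdall n, ?_⟩
  rw [eval_ne_iff hφ (hdall (2 * n))]
  intro hE
  have hst := relStar (u := u) hφ hψ heq n
  rw [hE, zero_mul] at hst
  exact (mul_ne_zero (mul_ne_zero (hdall (2 * n)) (hdall (2 * n + 1))) (htn (n + 1))) hst

end MainLemmas2


theorem stmt_0 (a b c d e : ℂ) (φ ψ : Polynomial ℂ)
    (hφ : φ = C a * X ^ 2 + C b * X + C c) (hψ : ψ = C d * X + C e)
    (hne : φ ≠ 0 ∨ ψ ≠ 0)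
    (u : PDual) (hu : u ≠ 0)
    (heq : dDeriv (pMul φ u) = pMul ψ u) :
    IsRegularFunc u ↔
      ∀ n : ℕ, ddC a d n ≠ 0 ∧ φ.eval (-(eeC b e n) / ddC a d (2 * n)) ≠ 0 := by
  exact ⟨necessity hφ hψ hne heq, fun hcond => sufficiency hφ hψ hu heq hcond⟩

end HahnOPSPaper
end
end

section
/- Let u be a nonzero linear functional on 𝒫 satisfying D(φu) = ψu with φ(x) = ax² + bx + c of degree at most 2 and ψ(x) = dx + e of degree at most 1, not both zero, and set d_n := d + an, e_n := e + bn. Assume d_n ≠ 0 and φ(−e_n/d_{2n}) ≠ 0 for all n ≥ 0, and let (P_n)_{n≥0} be the monic OPS with respect to u. Then the distributional Rodrigues formula P_n·u = k_n·D^n(φ^n·u) holds in 𝒫* for every n ≥ 0, where k_n := ∏_{j=0}^{n−1} d_{n+j−1}^{−1}. -/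
open Polynomial

noncomputable section

namespace HahnOPSPaper

/-! ### Auxiliary lemmas for the Rodrigues formula -/

lemma pMul_apply' (p : Polynomial ℂ) (u : PDual) (f : Polynomial ℂ) :
    pMul p u f = u (p * f) := rfl

lemma dDeriv_apply' (u : PDual) (f : Polynomial ℂ) :
    dDeriv u f = -(u (derivative f)) := rfl

lemma pMul_mul' (p q : Polynomial ℂ) (u : PDual) :
    pMul (p * q) u = pMul p (pMul q u) := by
  refine LinearMap.ext fun f => ?_; simp only [pMul_apply']; congr 1; ring

lemma pMul_add' (p q : Polynomial ℂ) (u : PDual) :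
    pMul (p + q) u = pMul p u + pMul q u := by
  refine LinearMap.ext fun f => ?_; simp [pMul_apply', add_mul]

lemma dDeriv_pMul' (p : Polynomial ℂ) (v : PDual) :
    dDeriv (pMul p v) = pMul (derivative p) v + pMul p (dDeriv v) := by
  refine LinearMap.ext fun f => ?_
  simp only [dDeriv_apply', pMul_apply', LinearMap.add_apply, derivative_mul, map_add]
  ring

lemma dDeriv_iterate_apply' (w : PDual) (n : ℕ) (f : Polynomial ℂ) :
    (dDeriv^[n] w) f = (-1)^n * w (derivative^[n] f) := by
  induction n generalizing f with
  | zero => simp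
  | succ n ih =>
    rw [Function.iterate_succ_apply', dDeriv_apply', ih, Function.iterate_succ_apply]
    ring

/-- Pearson equation for powers of `φ`. -/
lemma pearson_pow' (φ ψ : Polynomial ℂ) (u : PDual)
    (heq : dDeriv (pMul φ u) = pMul ψ u) (m : ℕ) :
    dDeriv (pMul (φ^(m+1)) u) = pMul ((C (m:ℂ) * derivative φ + ψ) * φ^m) u := by
  have h1 : φ^(m+1) = φ^m * φ := by ring
  rw [h1, pMul_mul', dDeriv_pMul', heq, ← pMul_mul', ← pMul_mul', ← pMul_add']
  congr 1
  rw [derivative_pow]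
  cases m with
  | zero => simp
  | succ j =>
    simp only [Nat.add_sub_cancel]
    ring

/-- The structure polynomials in the Rodrigues recursion. -/
def Rrec (φ ψ : Polynomial ℂ) (n : ℕ) : ℕ → Polynomial ℂ
  | 0 => 1
  | (k+1) => φ * derivative (Rrec φ ψ n k)
      + (C ((n - (k+1) : ℕ) : ℂ) * derivative φ + ψ) * Rrec φ ψ n k

lemma claimA' (φ ψ : Polynomial ℂ) (u : PDual)
    (heq : dDeriv (pMul φ u) = pMul ψ u) (n : ℕ) :
    ∀ k, k ≤ n → dDeriv^[k] (pMul (φ^n) u) = pMul (Rrec φ ψ n k * φ^(n-k)) u := by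
  intro k
  induction k with
  | zero => intro _; simp [Rrec]
  | succ k ih =>
    intro hk
    have hk' : k ≤ n := Nat.le_of_succ_le hk
    have hm : n - k = (n - (k+1)) + 1 := by omega
    rw [Function.iterate_succ_apply', ih hk', pMul_mul', dDeriv_pMul', hm,
      pearson_pow' φ ψ u heq, ← pMul_mul', ← pMul_mul', ← pMul_add']
    congr 1
    rw [Rrec]
    ring

lemma Rrec_natDegree_le' (φ ψ : Polynomial ℂ) (hφ2 : φ.natDegree ≤ 2)
    (hψ1 : ψ.natDegree ≤ 1) (n : ℕ) : ∀ k, (Rrec φ ψ n k).natDegree ≤ k := by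
  intro k
  induction k with
  | zero => simp [Rrec]
  | succ k ih =>
    rw [Rrec]
    refine (natDegree_add_le _ _).trans (max_le ?_ ?_)
    · rcases Nat.eq_zero_or_pos k with hk | hk
      · subst hk
        have : Rrec φ ψ n 0 = 1 := rfl
        simp [this]
      · refine (natDegree_mul_le).trans ?_
        have h1 : (derivative (Rrec φ ψ n k)).natDegree ≤ k - 1 :=
          (natDegree_derivative_le _).trans (by omega)
        omega
    · refine (natDegree_mul_le).trans ?_
      have h1 : (C ((n - (k+1) : ℕ) : ℂ) * derivative φ + ψ).natDegree ≤ 1 := by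
        refine (natDegree_add_le _ _).trans (max_le ?_ hψ1)
        refine (natDegree_mul_le).trans ?_
        have := natDegree_derivative_le φ
        simp only [natDegree_C]
        omega
      omega

lemma Rrec_coeff' (a b c d e : ℂ) (φ ψ : Polynomial ℂ)
    (hφ : φ = C a * X ^ 2 + C b * X + C c) (hψ : ψ = C d * X + C e) (n : ℕ) :
    ∀ k, k ≤ n → (Rrec φ ψ n k).coeff k
      = ∏ i ∈ Finset.range k, (d + a * ((2*n - i - 2 : ℕ) : ℂ)) := by
  have hφ2 : φ.natDegree ≤ 2 := by rw [hφ]; compute_degree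
  have hψ1 : ψ.natDegree ≤ 1 := by rw [hψ]; compute_degree
  intro k
  induction k with
  | zero => intro _; simp [Rrec]
  | succ k ih =>
    intro hk
    have hk' : k ≤ n := Nat.le_of_succ_le hk
    have hR : (Rrec φ ψ n k).natDegree ≤ k := Rrec_natDegree_le' φ ψ hφ2 hψ1 n k
    have hm1 : (C ((n - (k+1) : ℕ) : ℂ) * derivative φ + ψ).natDegree ≤ 1 := by
      refine (natDegree_add_le _ _).trans (max_le ?_ hψ1)
      refine (natDegree_mul_le).trans ?_
      have := natDegree_derivative_le φ
      simp only [natDegree_C]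
      omega
    have key2 : ((C ((n - (k+1) : ℕ) : ℂ) * derivative φ + ψ) * Rrec φ ψ n k).coeff (k+1)
        = (((n - (k+1) : ℕ) : ℂ) * (2*a) + d) * (Rrec φ ψ n k).coeff k := by
      have := coeff_mul_add_eq_of_natDegree_le hm1 hR
      rw [Nat.add_comm 1 k] at this
      rw [this]
      congr 1
      have hdφ : derivative φ = C (2*a) * X + C b := by
        rw [hφ]; simp; rw [show (C 2 : ℂ[X]) = 2 from map_ofNat C 2]; ring
      rw [hdφ, hψ]
      simp
    have key1 : (φ * derivative (Rrec φ ψ n k)).coeff (k+1)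
        = a * ((k:ℂ) * (Rrec φ ψ n k).coeff k) := by
      rcases Nat.eq_zero_or_pos k with hk0 | hk0
      · subst hk0
        have : Rrec φ ψ n 0 = 1 := rfl
        simp [this]
      · have hD : (derivative (Rrec φ ψ n k)).natDegree ≤ k - 1 :=
          (natDegree_derivative_le _).trans (by omega)
        have h21 : 2 + (k - 1) = k + 1 := by omega
        have := coeff_mul_add_eq_of_natDegree_le hφ2 hD
        rw [h21] at this
        have hc2 : φ.coeff 2 = a := by rw [hφ]; simp
        have hk1 : k - 1 + 1 = k := by omega
        have hc : ((k - 1 : ℕ) : ℂ) + 1 = (k : ℂ) := by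
          push_cast [Nat.cast_sub hk0]; ring
        rw [this, coeff_derivative, hk1, hc, hc2]
        ring
    rw [Rrec, coeff_add, key1, key2, ih hk', Finset.prod_range_succ]
    have hc1 : ((n - (k+1) : ℕ) : ℂ) = (n : ℂ) - (k : ℂ) - 1 := by
      push_cast [Nat.cast_sub hk]
      ring
    have hc2 : ((2*n - k - 2 : ℕ) : ℂ) = 2*(n:ℂ) - (k:ℂ) - 2 := by
      have : (2*n - k - 2 : ℕ) = 2*n - (k + 2) := by omega
      rw [this]
      push_cast [Nat.cast_sub (by omega : k + 2 ≤ 2*n)]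
      ring
    rw [hc1, hc2]
    ring

lemma ops_exists_comb' (P : ℕ → Polynomial ℂ)
    (hP1 : ∀ n, (P n).Monic ∧ (P n).natDegree = n) :
    ∀ N (g : Polynomial ℂ), g.natDegree ≤ N →
      ∃ c : ℕ → ℂ, g = ∑ j ∈ Finset.range (N+1), C (c j) * P j := by
  intro N
  induction N with
  | zero =>
    intro g hg
    have hP0 : P 0 = 1 := ((hP1 0).1.natDegree_eq_zero).mp (hP1 0).2
    exact ⟨fun _ => g.coeff 0, by
      simp [hP0, ← eq_C_of_natDegree_le_zero hg]⟩
  | succ N ih =>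
    intro g hg
    set γ := g.coeff (N+1) with hγ
    have hPd : (P (N+1)).natDegree = N+1 := (hP1 (N+1)).2
    have hPc : (P (N+1)).coeff (N+1) = 1 := by
      have := (hP1 (N+1)).1
      rw [Monic, leadingCoeff, hPd] at this
      exact this
    have hdeg : (g - C γ * P (N+1)).natDegree ≤ N := by
      rw [natDegree_le_iff_coeff_eq_zero]
      intro m hm
      rcases Nat.lt_or_ge (N+1) m with h | h
      · have h1 : g.coeff m = 0 := coeff_eq_zero_of_natDegree_lt (lt_of_le_of_lt hg h)
        have h2 : (P (N+1)).coeff m = 0 := coeff_eq_zero_of_natDegree_lt (by omega)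
        simp [h1, h2]
      · have hm1 : m = N + 1 := by omega
        subst hm1
        simp [hPc, hγ]
    obtain ⟨c, hc⟩ := ih _ hdeg
    refine ⟨Function.update c (N+1) γ, ?_⟩
    rw [Finset.sum_range_succ]
    have h1 : ∑ j ∈ Finset.range (N+1), C (Function.update c (N+1) γ j) * P j
        = ∑ j ∈ Finset.range (N+1), C (c j) * P j := by
      refine Finset.sum_congr rfl fun j hj => ?_
      rw [Function.update_of_ne (by simp at hj; omega)]
    rw [h1, Function.update_self, ← hc]
    ring

lemma ops_orth_eq_zero' (u : PDual) (P : ℕ → Polynomial ℂ)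
    (hP1 : ∀ n, (P n).Monic ∧ (P n).natDegree = n)
    (hP2 : ∀ m n, m ≠ n → u (P m * P n) = 0)
    (hP3 : ∀ n, u (P n ^ 2) ≠ 0)
    (N : ℕ) (g : Polynomial ℂ) (hg : g.natDegree ≤ N)
    (h0 : ∀ j, j ≤ N → u (g * P j) = 0) : g = 0 := by
  obtain ⟨c, hc⟩ := ops_exists_comb' P hP1 N g hg
  have hci : ∀ i, i ≤ N → c i = 0 := by
    intro i hi
    have h1 : u (g * P i) = c i * u (P i ^ 2) := by
      rw [hc, Finset.sum_mul, map_sum]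
      rw [Finset.sum_eq_single i]
      · rw [mul_assoc, ← smul_eq_C_mul, map_smul, ← sq]
        rfl
      · intro j _ hji
        rw [mul_assoc, ← smul_eq_C_mul, map_smul, hP2 j i hji]
        simp
      · intro hni
        exact absurd (Finset.mem_range.mpr (by omega)) hni
    have := h0 i hi
    rw [h1] at this
    exact (mul_eq_zero.mp this).resolve_right (hP3 i)
  rw [hc]
  refine Finset.sum_eq_zero fun j hj => ?_
  rw [hci j (by simp at hj; omega)]
  simp

theorem stmt_2 (a b c d e : ℂ) (φ ψ : Polynomial ℂ)
    (hφ : φ = C a * X ^ 2 + C b * X + C c) (hψ : ψ = C d * X + C e)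
    (hne : φ ≠ 0 ∨ ψ ≠ 0)
    (u : PDual) (hu : u ≠ 0)
    (heq : dDeriv (pMul φ u) = pMul ψ u)
    (hcond : ∀ n : ℕ, ddC a d n ≠ 0 ∧ φ.eval (-(eeC b e n) / ddC a d (2 * n)) ≠ 0)
    (P : ℕ → Polynomial ℂ) (hP : IsMonicOPS u P) :
    ∀ n : ℕ, pMul (P n) u =
      (∏ j ∈ Finset.range n, (ddC a d (n + j - 1))⁻¹) • dDeriv^[n] (pMul (φ ^ n) u) := by
  rcases hP with ⟨hP1, hP2, hP3⟩
  intro n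
  rcases Nat.eq_zero_or_pos n with hn0 | hn0
  · subst hn0
    have hP0 : P 0 = 1 := ((hP1 0).1.natDegree_eq_zero).mp (hP1 0).2
    simp [hP0]
  -- abbreviations
  set lam := ∏ j ∈ Finset.range n, ddC a d (n + j - 1) with hlam
  have hlam0 : lam ≠ 0 :=
    Finset.prod_ne_zero_iff.mpr fun j _ => (hcond (n + j - 1)).1
  have hφ2 : φ.natDegree ≤ 2 := by rw [hφ]; compute_degree
  have hψ1 : ψ.natDegree ≤ 1 := by rw [hψ]; compute_degree
  -- the n-th iterated derivative as a polynomial multiple of u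
  have hA : dDeriv^[n] (pMul (φ^n) u) = pMul (Rrec φ ψ n n) u := by
    have := claimA' φ ψ u heq n n le_rfl
    rwa [Nat.sub_self, pow_zero, mul_one] at this
  -- leading coefficient of Rrec
  have hcoeff : (Rrec φ ψ n n).coeff n = lam := by
    rw [Rrec_coeff' a b c d e φ ψ hφ hψ n n le_rfl, hlam]
    rw [← Finset.prod_range_reflect (fun j => ddC a d (n + j - 1)) n]
    refine Finset.prod_congr rfl fun i hi => ?_
    rw [Finset.mem_range] at hi
    have h1 : n + (n - 1 - i) - 1 = 2*n - i - 2 := by omega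
    rw [h1]
    rfl
  -- vanishing against lower-degree polynomials
  have hvan : ∀ g : Polynomial ℂ, g.natDegree < n → u (Rrec φ ψ n n * g) = 0 := by
    intro g hg
    have h1 : (pMul (Rrec φ ψ n n) u) g = u (Rrec φ ψ n n * g) := rfl
    rw [← h1, ← hA, dDeriv_iterate_apply',
      Polynomial.iterate_derivative_eq_zero hg, map_zero, mul_zero]
  -- identify Rrec with lam • P n
  have hRP : Rrec φ ψ n n = C lam * P n := by
    have hRd : (Rrec φ ψ n n).natDegree ≤ n := Rrec_natDegree_le' φ ψ hφ2 hψ1 n n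
    have hPd : (P n).natDegree = n := (hP1 n).2
    have hPc : (P n).coeff n = 1 := by
      have := (hP1 n).1
      rw [Monic, leadingCoeff, hPd] at this
      exact this
    have hgdeg : (Rrec φ ψ n n - C lam * P n).natDegree ≤ n - 1 := by
      rw [natDegree_le_iff_coeff_eq_zero]
      intro m hm
      rcases Nat.lt_or_ge n m with h | h
      · have h1 : (Rrec φ ψ n n).coeff m = 0 :=
          coeff_eq_zero_of_natDegree_lt (lt_of_le_of_lt hRd h)
        have h2 : (P n).coeff m = 0 := coeff_eq_zero_of_natDegree_lt (by omega)
        simp [h1, h2]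
      · have hm1 : m = n := by omega
        subst hm1
        simp [hcoeff, hPc]
    have h0 : ∀ j, j ≤ n - 1 → u ((Rrec φ ψ n n - C lam * P n) * P j) = 0 := by
      intro j hj
      have hjn : j < n := by omega
      rw [sub_mul, map_sub]
      have h1 : u (Rrec φ ψ n n * P j) = 0 := hvan (P j) (by rw [(hP1 j).2]; exact hjn)
      have h2 : u (C lam * P n * P j) = 0 := by
        rw [mul_assoc, ← smul_eq_C_mul, map_smul, hP2 n j (by omega)]
        simp
      rw [h1, h2, sub_zero]
    have := ops_orth_eq_zero' u P hP1 hP2 hP3 (n-1) _ hgdeg h0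
    linear_combination (norm := module) this
  -- conclude
  have hinv : (∏ j ∈ Finset.range n, (ddC a d (n + j - 1))⁻¹) = lam⁻¹ := by
    rw [hlam, ← Finset.prod_inv_distrib]
  have hsm : pMul (C lam * P n) u = lam • pMul (P n) u := by
    refine LinearMap.ext fun f => ?_
    simp [pMul_apply', mul_assoc, ← smul_eq_C_mul]
  rw [hinv, hA, hRP, hsm, smul_smul, inv_mul_cancel₀ hlam0, one_smul]

end HahnOPSPaper
end
end

section
/- Let u be a nonzero linear functional on 𝒫 satisfying D_{q,ω}(φu) = ψu, where φ(x) = ax² + bx + c has degree at most 2, ψ(x) = dx + e has degree at most 1, and at least one of φ, ψ is not the zero polynomial. If d_n ≠ 0 and φ(−e_n/d_{2n}) ≠ 0 for every integer n ≥ 0, then u is regular. -/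
open Polynomial

noncomputable section

namespace HahnOPSPaper

namespace W

variable (q ω : ℂ) (Dstar : Polynomial ℂ →ₗ[ℂ] Polynomial ℂ)

/-- The downstairs Hahn operator, built from `Dstar`. -/
def Dop : Polynomial ℂ →ₗ[ℂ] Polynomial ℂ := q⁻¹ • (Dstar ∘ₗ Lop q ω)

def piq : Polynomial ℂ := C (q - 1) * X + C ω
def pis : Polynomial ℂ := C (q⁻¹ - 1) * X + C (-ω/q)

variable {q ω Dstar}
variable (hq0 : q ≠ 0) (hqω : q ≠ 1 ∨ ω ≠ 0) (hDstar : IsHahn q⁻¹ (-ω/q) Dstar)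

lemma lop_apply (f : Polynomial ℂ) : Lop q ω f = f.comp (C q * X + C ω) := by
  simp [Lop, comp, aeval_def]

lemma lop_mul (f g : Polynomial ℂ) : Lop q ω (f * g) = Lop q ω f * Lop q ω g := by
  simp [Lop]

lemma lop_C (x : ℂ) : Lop q ω (C x) = C x := by simp [Lop]

lemma lop_one : Lop q ω (1 : Polynomial ℂ) = 1 := by simp [Lop]

lemma lop_X : Lop q ω X = C q * X + C ω := by simp [Lop]

include hq0 in
lemma ls_l (f : Polynomial ℂ) : Lop q⁻¹ (-ω/q) (Lop q ω f) = f := by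
  rw [lop_apply, lop_apply, comp_assoc]
  have : (C q * X + C ω).comp (C q⁻¹ * X + C (-ω / q)) = X := by
    rw [add_comp, mul_comp, C_comp, C_comp, X_comp, mul_add, ← mul_assoc, ← C_mul, ← C_mul,
      add_assoc, ← C_add, mul_inv_cancel₀ hq0,
      show q * (-ω/q) + ω = 0 from by rw [mul_comm, div_mul_cancel₀ _ hq0]; ring, C_0, add_zero, C_1, one_mul]
  rw [this, comp_X]

include hq0 in
lemma l_ls (f : Polynomial ℂ) : Lop q ω (Lop q⁻¹ (-ω/q) f) = f := by
  rw [lop_apply, lop_apply, comp_assoc]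
  have : (C q⁻¹ * X + C (-ω / q)).comp (C q * X + C ω) = X := by
    rw [add_comp, mul_comp, C_comp, C_comp, X_comp, mul_add, ← mul_assoc, ← C_mul, ← C_mul,
      add_assoc, ← C_add, inv_mul_cancel₀ hq0,
      show q⁻¹ * ω + -ω/q = 0 from by field_simp; ring, C_0, add_zero, C_1, one_mul]
  rw [this, comp_X]

include hqω in
lemma piq_ne : (piq q ω) ≠ 0 := by
  intro h
  rcases hqω with h1 | h1
  · have := congrArg (fun p => coeff p 1) h
    simp [piq, coeff_one] at this
    exact h1 (by linear_combination this)
  · have := congrArg (fun p => coeff p 0) h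
    simp [piq] at this
    exact h1 this

include hq0 hqω in
lemma pis_ne : (pis q ω) ≠ 0 := by
  intro h
  rcases hqω with h1 | h1
  · have := congrArg (fun p => coeff p 1) h
    simp [pis, coeff_one] at this
    have : q⁻¹ = 1 := by linear_combination this
    exact h1 (by field_simp at this; simp [this])
  · have := congrArg (fun p => coeff p 0) h
    simp [pis] at this
    rcases this with h2 | h2
    · exact h1 h2
    · exact hq0 h2

include hq0 hDstar in
omit hq0 in
lemma hDs (f : Polynomial ℂ) :
    pis q ω * Dstar f = Lop q⁻¹ (-ω/q) f - f := by
  rw [lop_apply]; exact hDstar f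

include hq0 hDstar in
lemma hD (f : Polynomial ℂ) :
    piq q ω * Dop q ω Dstar f = Lop q ω f - f := by
  have h := hDs hDstar (Lop q ω f)
  rw [show Lop q⁻¹ (-ω/q) (Lop q ω f) = f from ls_l hq0 f] at h
  have hpi : piq q ω = C (-q) * pis q ω := by
    simp only [piq, pis]
    rw [mul_add, ← mul_assoc, ← C_mul, ← C_mul]
    have e1 : -q * (q⁻¹ - 1) = q - 1 := by field_simp; ring
    have e2 : -q * (-ω/q) = ω := by field_simp
    rw [e1, e2]
  have : Dop q ω Dstar f = q⁻¹ • Dstar (Lop q ω f) := rfl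
  rw [this, hpi, smul_eq_C_mul]
  calc C (-q) * pis q ω * (C q⁻¹ * Dstar (Lop q ω f))
      = (C (-q) * C q⁻¹) * (pis q ω * Dstar (Lop q ω f)) := by ring
    _ = C (-1) * (f - Lop q ω f) := by
        rw [h, ← C_mul]; congr 1; · congr 1; field_simp
    _ = Lop q ω f - f := by
        rw [show (C (-1) : Polynomial ℂ) = -1 from by simp]; ring

include hqω in
lemma cancel_piq {p r : Polynomial ℂ} (h : piq q ω * p = piq q ω * r) : p = r :=
  mul_left_cancel₀ (piq_ne hqω) h

include hq0 hqω in
lemma cancel_pis {p r : Polynomial ℂ} (h : pis q ω * p = pis q ω * r) : p = r :=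
  mul_left_cancel₀ (pis_ne hq0 hqω) h

include hq0 hqω hDstar in
lemma D_C (x : ℂ) : Dop q ω Dstar (C x) = 0 := by
  apply cancel_piq hqω
  rw [hD hq0 hDstar, lop_C, mul_zero, sub_self]

include hq0 hqω hDstar in
lemma D_one : Dop q ω Dstar (1 : Polynomial ℂ) = 0 := by
  rw [show (1 : Polynomial ℂ) = C 1 from by simp]; exact D_C hq0 hqω hDstar 1

include hq0 hqω hDstar in
lemma D_X : Dop q ω Dstar X = 1 := by
  apply cancel_piq hqω
  rw [hD hq0 hDstar, lop_X, mul_one, piq]; simp only [C_sub, C_1]; ring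

include hq0 hqω hDstar in
lemma D_X2 : Dop q ω Dstar (X^2) = C (q+1) * X + C ω := by
  apply cancel_piq hqω
  rw [hD hq0 hDstar, show Lop q ω (X^2) = (C q * X + C ω)^2 from by simp [Lop], piq]
  simp only [C_add, C_sub, C_1]
  ring

include hq0 hqω hDstar in
lemma D_mul (f g : Polynomial ℂ) :
    Dop q ω Dstar (f * g) = Lop q ω f * Dop q ω Dstar g + Dop q ω Dstar f * g := by
  apply cancel_piq hqω
  rw [hD hq0 hDstar, lop_mul, mul_add]
  have h1 := hD hq0 hDstar f
  have h2 := hD hq0 hDstar g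
  calc Lop q ω f * Lop q ω g - f * g
      = Lop q ω f * (Lop q ω g - g) + (Lop q ω f - f) * g := by ring
    _ = Lop q ω f * (piq q ω * Dop q ω Dstar g) + piq q ω * Dop q ω Dstar f * g := by
        rw [h1, h2]
    _ = piq q ω * (Lop q ω f * Dop q ω Dstar g) + piq q ω * (Dop q ω Dstar f * g) := by ring

include hq0 hqω hDstar in
lemma Ds_mul (f g : Polynomial ℂ) :
    Dstar (f * g) = Lop q⁻¹ (-ω/q) f * Dstar g + Dstar f * g := by
  apply cancel_pis hq0 hqω
  rw [hDs hDstar, lop_mul, mul_add]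
  have h1 := hDs hDstar f (q := q) (ω := ω)
  have h2 := hDs hDstar g (q := q) (ω := ω)
  calc Lop q⁻¹ (-ω/q) f * Lop q⁻¹ (-ω/q) g - f * g
      = Lop q⁻¹ (-ω/q) f * (Lop q⁻¹ (-ω/q) g - g) + (Lop q⁻¹ (-ω/q) f - f) * g := by ring
    _ = piq q ω * 0 + (Lop q⁻¹ (-ω/q) f * (pis q ω * Dstar g) + pis q ω * Dstar f * g) := by
        rw [h1, h2]; ring
    _ = pis q ω * (Lop q⁻¹ (-ω/q) f * Dstar g) + pis q ω * (Dstar f * g) := by ring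

include hq0 in
lemma ls_piq : Lop q⁻¹ (-ω/q) (piq q ω) = -pis q ω := by
  rw [lop_apply, piq, pis, add_comp, mul_comp, C_comp, C_comp, X_comp]
  have e1 : (q-1) * q⁻¹ = -(q⁻¹ - 1) := by field_simp; ring
  have e2 : (q-1) * (-ω/q) + ω = -(-ω/q) := by field_simp; ring
  rw [mul_add, ← mul_assoc, ← C_mul, ← C_mul, add_assoc, ← C_add, e1, e2]
  simp only [C_neg]
  ring

include hq0 in
lemma lop_piq : Lop q ω (piq q ω) = C q * piq q ω := by
  rw [lop_apply, piq, add_comp, mul_comp, C_comp, C_comp, X_comp]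
  rw [mul_add, ← mul_assoc, ← C_mul, ← C_mul, add_assoc, ← C_add]
  rw [show (q-1) * ω + ω = q * ω from by ring]
  rw [show (q-1) * q = q * (q-1) from by ring]
  simp only [C_mul]
  ring

include hq0 hqω hDstar in
lemma LsD (f : Polynomial ℂ) : Lop q⁻¹ (-ω/q) (Dop q ω Dstar f) = Dstar f := by
  apply cancel_pis hq0 hqω
  have h := congrArg (Lop q⁻¹ (-ω/q)) (hD hq0 hDstar f)
  rw [map_sub, lop_mul, ls_piq hq0, ls_l hq0] at h
  rw [hDs hDstar]
  calc pis q ω * Lop q⁻¹ (-ω/q) (Dop q ω Dstar f)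
      = -(-pis q ω * Lop q⁻¹ (-ω/q) (Dop q ω Dstar f)) := by ring
    _ = -(f - Lop q⁻¹ (-ω/q) f) := by rw [h]
    _ = Lop q⁻¹ (-ω/q) f - f := by ring

include hq0 hqω hDstar in
lemma DL (f : Polynomial ℂ) :
    Dop q ω Dstar (Lop q ω f) = q • Lop q ω (Dop q ω Dstar f) := by
  apply cancel_piq hqω
  have h := congrArg (Lop q ω) (hD hq0 hDstar f)
  rw [map_sub, lop_mul, lop_piq hq0] at h
  rw [hD hq0 hDstar, ← h, smul_eq_C_mul]
  ring

include hq0 in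
lemma DsL (f : Polynomial ℂ) : Dstar (Lop q ω f) = q • Dop q ω Dstar f := by
  have : Dop q ω Dstar f = q⁻¹ • Dstar (Lop q ω f) := rfl
  rw [this, smul_smul, mul_inv_cancel₀ hq0, one_smul]

/-! ### q-bracket lemmas -/

lemma qB_zero : qBracket q 0 = 0 := by simp [qBracket]

lemma qB_one : qBracket q 1 = 1 := by simp [qBracket]

lemma qB_succ (n : ℕ) : qBracket q (n+1) = qBracket q n + q^n := by
  simp [qBracket, Finset.sum_range_succ]

lemma qB_add (m n : ℕ) : qBracket q (m+n) = qBracket q m + q^m * qBracket q n := by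
  simp only [qBracket, Finset.sum_range_add, pow_add, Finset.mul_sum]

lemma qB_geom (n : ℕ) : (q - 1) * qBracket q n + 1 = q^n := by
  have := geom_sum_mul q n
  simp only [qBracket]
  linear_combination this

lemma qB_cast (n : ℕ) : qBracket 1 n = n := by simp [qBracket]

variable (hqr : ∀ n : ℕ, 0 < n → q ^ n = 1 → q = 1)

include hqr in
lemma qB_ne (n : ℕ) (hn : 0 < n) : qBracket q n ≠ 0 := by
  by_cases hq1 : q = 1
  · subst hq1; rw [qB_cast]; exact_mod_cast hn.ne'
  · intro h
    have := qB_geom (q := q) n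
    rw [h, mul_zero, zero_add] at this
    exact hq1 (hqr n hn this.symm)

/-! ### coefficient slot lemmas -/

/-- `p` has degree at most `n` with coefficient `v` in slot `n`. -/
def TC (p : Polynomial ℂ) (n : ℕ) (v : ℂ) : Prop := p.natDegree ≤ n ∧ p.coeff n = v

lemma Aq_deg : (C q * X + C ω).natDegree ≤ 1 := natDegree_linear_le

lemma Apow_deg (k : ℕ) : ((C q * X + C ω)^k).natDegree ≤ k :=
  le_trans (natDegree_pow_le) (by
    calc k * (C q * X + C ω).natDegree ≤ k * 1 := Nat.mul_le_mul_left k Aq_deg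
    _ = k := Nat.mul_one k)

include hq0 in
lemma coeff_Apow (k j : ℕ) :
    ((C q * X + C ω)^k).coeff j = q^j * ω^(k-j) * (k.choose j) := by
  have hA : C q * X + C ω = C q * (X + C (ω/q)) := by
    rw [mul_add, ← C_mul, mul_div_cancel₀ _ hq0]
  rw [hA, mul_pow, ← C_pow, coeff_C_mul, coeff_X_add_C_pow]
  rcases le_or_gt j k with h | h
  · rw [div_pow]
    rw [show q^k = q^j * q^(k-j) from by rw [← pow_add]; congr 1; omega]
    field_simp
  · rw [Nat.choose_eq_zero_of_lt h]
    simp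

include hq0 in
lemma tc_L {f : Polynomial ℂ} {n : ℕ} {v : ℂ} (h : TC f n v) :
    TC (Lop q ω f) n (q^n * v) := by
  obtain ⟨hdeg, hco⟩ := h
  constructor
  · rw [lop_apply]
    exact le_trans natDegree_comp_le (by
      calc f.natDegree * (C q * X + C ω).natDegree ≤ n * 1 :=
        Nat.mul_le_mul hdeg Aq_deg
      _ = n := Nat.mul_one n)
  · have hf : f = ∑ i ∈ Finset.range (n+1), C (f.coeff i) * X^i := by
      conv_lhs => rw [f.as_sum_range' (n+1) (Nat.lt_succ_of_le hdeg)]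
      exact Finset.sum_congr rfl (fun i _ => (C_mul_X_pow_eq_monomial).symm)
    rw [show Lop q ω f = ∑ i ∈ Finset.range (n+1), C (f.coeff i) * (C q * X + C ω)^i from by
      conv_lhs => rw [hf]
      rw [map_sum]
      exact Finset.sum_congr rfl (fun i _ => by simp [Lop])]
    rw [finset_sum_coeff, Finset.sum_range_succ]
    rw [Finset.sum_eq_zero (fun i hi => by
      rw [coeff_C_mul, coeff_eq_zero_of_natDegree_lt
        (lt_of_le_of_lt (Apow_deg i) (Finset.mem_range.mp hi)), mul_zero])]
    rw [coeff_C_mul, coeff_Apow hq0, Nat.sub_self, Nat.choose_self, pow_zero]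
    rw [hco]; ring

include hq0 in
lemma coeff_L2 {f : Polynomial ℂ} {n : ℕ} (hdeg : f.natDegree ≤ n + 1) :
    (Lop q ω f).coeff n = q^n * f.coeff n + (n+1) * q^n * ω * f.coeff (n+1) := by
  have hf : f = ∑ i ∈ Finset.range (n+2), C (f.coeff i) * X^i := by
    conv_lhs => rw [f.as_sum_range' (n+2) (by omega)]
    exact Finset.sum_congr rfl (fun i _ => (C_mul_X_pow_eq_monomial).symm)
  rw [show Lop q ω f = ∑ i ∈ Finset.range (n+2), C (f.coeff i) * (C q * X + C ω)^i from by
    conv_lhs => rw [hf]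
    rw [map_sum]
    exact Finset.sum_congr rfl (fun i _ => by simp [Lop])]
  rw [finset_sum_coeff, Finset.sum_range_succ, Finset.sum_range_succ]
  rw [Finset.sum_eq_zero (fun i hi => by
    rw [coeff_C_mul, coeff_eq_zero_of_natDegree_lt
      (lt_of_le_of_lt (Apow_deg i) (Finset.mem_range.mp hi)), mul_zero])]
  rw [coeff_C_mul, coeff_C_mul, coeff_Apow hq0, coeff_Apow hq0]
  rw [Nat.sub_self, Nat.choose_self, pow_zero, show n+1-n = 1 by omega, pow_one,
    Nat.choose_succ_self_right]
  push_cast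
  ring

lemma tc_mul {p r : Polynomial ℂ} {m n : ℕ} {v w : ℂ}
    (hp : TC p m v) (hr : TC r n w) : TC (p * r) (m+n) (v*w) := by
  refine ⟨le_trans natDegree_mul_le (Nat.add_le_add hp.1 hr.1), ?_⟩
  rw [coeff_mul_add_eq_of_natDegree_le hp.1 hr.1, hp.2, hr.2]

include hq0 hqω hDstar in
lemma D_deg {f : Polynomial ℂ} {n : ℕ} (hdeg : f.natDegree ≤ n + 1) :
    (Dop q ω Dstar f).natDegree ≤ n := by
  have key := hD hq0 hDstar f
  have hsub : (Lop q ω f - f).natDegree ≤ n + 1 :=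
    le_trans (natDegree_sub_le _ _) (sup_le (tc_L hq0 ⟨hdeg, rfl⟩).1 hdeg)
  by_cases hq1 : q = 1
  · rcases hqω with h | h; · exact absurd hq1 h
    rename ω ≠ 0 => hω
    have hpiq : piq q ω = C ω := by rw [piq, hq1]; simp
    have hDf : Dop q ω Dstar f = C ω⁻¹ * (Lop q ω f - f) := by
      rw [← key, hpiq, ← mul_assoc, ← C_mul, inv_mul_cancel₀ hω, C_1, one_mul]
    rw [hDf]
    refine le_trans (natDegree_C_mul_le _ _) ?_
    rw [natDegree_le_iff_coeff_eq_zero]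
    intro m hm
    rcases Nat.lt_or_ge m (n+2) with h2 | h2
    · have hmeq : m = n + 1 := by omega
      subst hmeq
      rw [coeff_sub, (tc_L hq0 ⟨hdeg, rfl⟩).2, hq1, one_pow, one_mul, sub_self]
    · exact coeff_eq_zero_of_natDegree_lt (lt_of_le_of_lt hsub (by omega))
  · by_cases hDf0 : Dop q ω Dstar f = 0
    · rw [hDf0]; simp
    · have hpideg : (piq q ω).natDegree = 1 := by
        rw [piq]; exact natDegree_linear (sub_ne_zero.mpr hq1)
      have := natDegree_mul (piq_ne hqω) hDf0
      rw [key, hpideg] at this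
      omega

include hq0 hqω hDstar in
lemma tc_D {f : Polynomial ℂ} {n : ℕ} {v : ℂ} (h : TC f (n+1) v) :
    TC (Dop q ω Dstar f) n (qBracket q (n+1) * v) := by
  obtain ⟨hdeg, hco⟩ := h
  refine ⟨D_deg hq0 hqω hDstar hdeg, ?_⟩
  have key := congrArg (fun p => coeff p (n+1)) (hD hq0 hDstar f)
  simp only [piq, coeff_sub] at key
  rw [add_mul, coeff_add, coeff_C_mul, mul_assoc, coeff_C_mul, coeff_X_mul] at key
  rw [coeff_eq_zero_of_natDegree_lt
    (Nat.lt_succ_of_le (D_deg hq0 hqω hDstar hdeg)), mul_zero, add_zero] at key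
  by_cases hq1 : q = 1
  · rcases hqω with hx | hω; · exact absurd hq1 hx
    subst hq1
    have hkey2 : (Dop 1 ω Dstar f).coeff n =
        ω⁻¹ * ((Lop 1 ω f).coeff n - f.coeff n) := by
      have key2 := congrArg (fun p => coeff p n) (hD hq0 hDstar f)
      simp only [piq, coeff_sub, sub_self] at key2
      rw [C_0, zero_mul, zero_add, coeff_C_mul] at key2
      rw [← key2, ← mul_assoc, inv_mul_cancel₀ hω, one_mul]
    rw [hkey2, coeff_L2 hq0 hdeg, hco, qB_cast]
    push_cast
    field_simp
    ring
  · apply mul_left_cancel₀ (sub_ne_zero.mpr hq1)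
    rw [key, (tc_L hq0 ⟨hdeg, rfl⟩).2, hco]
    have := qB_geom (q := q) (n+1)
    linear_combination (-v) * this

/-! ### Pearson framework -/

variable (q ω Dstar)

def Psi (d e : ℂ) : Polynomial ℂ := C d * X + C e

def phiP (a b c : ℂ) : Polynomial ℂ := C a * X^2 + C b * X + C c

variable (a b c : ℂ)

/-- The functional equation `⟨u, φ·D g + ψ·L g⟩ = 0` for all `g`. -/
def Pearson (v : PDual) (d e : ℂ) : Prop :=
  ∀ g : Polynomial ℂ, v (phiP a b c * Dop q ω Dstar g + Psi d e * Lop q ω g) = 0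

/-- The eigen-equation `φ·D²R + ψ·L(DR) = μ·L R`. -/
def Eig (d e : ℂ) (R : Polynomial ℂ) (μ : ℂ) : Prop :=
  phiP a b c * Dop q ω Dstar (Dop q ω Dstar R) + Psi d e * Lop q ω (Dop q ω Dstar R)
    = μ • Lop q ω R

/-- The derived functional `h ↦ v(φ·L*h)`. -/
def derF (v : PDual) : PDual :=
  v ∘ₗ (LinearMap.mulLeft ℂ (phiP a b c)) ∘ₗ (Lop q⁻¹ (-ω/q))

lemma derF_apply (v : PDual) (h : Polynomial ℂ) :
    derF q ω a b c v h = v (phiP a b c * Lop q⁻¹ (-ω/q) h) := rfl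

variable {q ω Dstar a b c}

include hq0 hDstar in
lemma starPearson {v : PDual} {d e : ℂ} (hP : Pearson q ω Dstar a b c v d e)
    (h : Polynomial ℂ) :
    v (phiP a b c * Dstar h) = -q * v (Psi d e * h) := by
  have h0 := hP (Lop q⁻¹ (-ω/q) h)
  have hDg : Dop q ω Dstar (Lop q⁻¹ (-ω/q) h) = q⁻¹ • Dstar h := by
    show q⁻¹ • Dstar (Lop q ω (Lop q⁻¹ (-ω/q) h)) = q⁻¹ • Dstar h
    rw [l_ls hq0]
  rw [hDg, l_ls hq0, mul_smul_comm, map_add, map_smul] at h0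
  have : v (phiP a b c * Dstar h) = q * (q⁻¹ * v (phiP a b c * Dstar h)) := by
    rw [← mul_assoc, mul_inv_cancel₀ hq0, one_mul]
  rw [this]
  rw [smul_eq_mul] at h0
  have : q⁻¹ * v (phiP a b c * Dstar h) = - v (Psi d e * h) := by linear_combination h0
  rw [this]; ring

include hq0 hqω hDstar in
lemma D_phiP : Dop q ω Dstar (phiP a b c) = C (a*(q+1)) * X + C (a*ω + b) := by
  have : phiP a b c = a • X^2 + b • X + c • (1 : Polynomial ℂ) := by
    simp [phiP, smul_eq_C_mul]
  rw [this, map_add, map_add, map_smul, map_smul, map_smul,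
    D_X2 hq0 hqω hDstar, D_X hq0 hqω hDstar, D_one hq0 hqω hDstar]
  simp only [smul_eq_C_mul, C_mul, C_add]
  ring

include hq0 hqω hDstar in
lemma psi_shift (d e : ℂ) :
    Psi (q^2*d + a*(1+q)) (q*e + ω*(q*d+a) + b)
      = q • Lop q ω (Psi d e) + Dop q ω Dstar (phiP a b c) := by
  have hL : Lop q ω (Psi d e) = C d * (C q * X + C ω) + C e := by
    have : Psi d e = d • X + e • (1 : Polynomial ℂ) := by simp [Psi, smul_eq_C_mul]
    rw [this, map_add, map_smul, map_smul, lop_X, lop_one]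
    simp only [smul_eq_C_mul, mul_one]
  rw [hL, D_phiP hq0 hqω hDstar, Psi]
  simp only [smul_eq_C_mul, C_mul, C_add, C_pow, C_1]
  ring

include hq0 hqω hDstar in
lemma D_Psi (d e : ℂ) : Dop q ω Dstar (Psi d e) = C d := by
  have : Psi d e = d • X + e • (1 : Polynomial ℂ) := by simp [Psi, smul_eq_C_mul]
  rw [this, map_add, map_smul, map_smul, D_X hq0 hqω hDstar, D_one hq0 hqω hDstar]
  simp [smul_eq_C_mul]

-- Hierarchy: the derived functional satisfies Pearson with shifted parameters.
include hq0 hqω hDstar in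
lemma pearson_step {v : PDual} {d e : ℂ} (hP : Pearson q ω Dstar a b c v d e) :
    Pearson q ω Dstar a b c (derF q ω a b c v) (q^2*d + a*(1+q)) (q*e + ω*(q*d+a) + b) := by
  intro g
  set d' := q^2*d + a*(1+q)
  set e' := q*e + ω*(q*d+a) + b
  rw [derF_apply]
  have hPsi' : Lop q⁻¹ (-ω/q) (Psi d' e') = q • Psi d e + Dstar (phiP a b c) := by
    rw [show Psi d' e' = q • Lop q ω (Psi d e) + Dop q ω Dstar (phiP a b c) from
      psi_shift hq0 hqω hDstar d e]
    rw [map_add, map_smul, ls_l hq0, LsD hq0 hqω hDstar]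
  have hLs : phiP a b c * Lop q⁻¹ (-ω/q) (phiP a b c * Dop q ω Dstar g + Psi d' e' * Lop q ω g)
      = phiP a b c * (Lop q⁻¹ (-ω/q) (phiP a b c) * Dstar g)
        + phiP a b c * ((q • Psi d e + Dstar (phiP a b c)) * g) := by
    rw [map_add, lop_mul, lop_mul, LsD hq0 hqω hDstar, ls_l hq0, hPsi', mul_add]
  rw [hLs]
  have harg : phiP a b c * (Lop q⁻¹ (-ω/q) (phiP a b c) * Dstar g)
      + phiP a b c * ((q • Psi d e + Dstar (phiP a b c)) * g)
      = phiP a b c * Dstar (phiP a b c * g) + q • (Psi d e * (phiP a b c * g)) := by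
    rw [Ds_mul hq0 hqω hDstar (phiP a b c) g]
    simp only [smul_eq_C_mul]
    ring
  rw [harg, map_add, map_smul, starPearson hq0 hDstar hP (phiP a b c * g), smul_eq_mul]
  ring

-- Eigen-equation step along the hierarchy.
include hq0 hqω hDstar in
lemma eig_step {d e : ℂ} {R : Polynomial ℂ} {μ : ℂ}
    (hE : Eig q ω Dstar a b c d e R μ) :
    Eig q ω Dstar a b c (q^2*d + a*(1+q)) (q*e + ω*(q*d+a) + b)
      (Dop q ω Dstar R) (q*μ - d) := by
  have E' := congrArg (Dop q ω Dstar) hE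
  rw [map_add, map_smul, D_mul hq0 hqω hDstar, D_mul hq0 hqω hDstar,
    DL hq0 hqω hDstar, D_Psi hq0 hqω hDstar] at E'
  rw [DL hq0 hqω hDstar] at E'
  show phiP a b c * Dop q ω Dstar (Dop q ω Dstar (Dop q ω Dstar R))
    + Psi (q^2*d + a*(1+q)) (q*e + ω*(q*d+a) + b)
      * Lop q ω (Dop q ω Dstar (Dop q ω Dstar R)) = _
  rw [psi_shift hq0 hqω hDstar]
  have h1 : Lop q ω (phiP a b c) - phiP a b c
      = piq q ω * Dop q ω Dstar (phiP a b c) := (hD hq0 hDstar _).symm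
  have h2 : Lop q ω (Dop q ω Dstar (Dop q ω Dstar R)) - Dop q ω Dstar (Dop q ω Dstar R)
      = piq q ω * Dop q ω Dstar (Dop q ω Dstar (Dop q ω Dstar R)) := (hD hq0 hDstar _).symm
  simp only [smul_eq_C_mul, C_sub, C_mul] at E' ⊢
  linear_combination E' - (Dop q ω Dstar (Dop q ω Dstar (Dop q ω Dstar R))) * h1
    + (Dop q ω Dstar (phiP a b c)) * h2

-- Symmetry: `ν·⟨v, L(f·S)⟩ = -⟨v, φ·Df·DS⟩`.
include hq0 hqω hDstar in
lemma symm_rel {v : PDual} {d e : ℂ} (hP : Pearson q ω Dstar a b c v d e)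
    {S : Polynomial ℂ} {ν : ℂ} (hS : Eig q ω Dstar a b c d e S ν) (f : Polynomial ℂ) :
    ν * v (Lop q ω (f * S))
      = - v (phiP a b c * (Dop q ω Dstar f * Dop q ω Dstar S)) := by
  have h0 := hP (f * Dop q ω Dstar S)
  rw [D_mul hq0 hqω hDstar, lop_mul] at h0
  have harg : phiP a b c * (Lop q ω f * Dop q ω Dstar (Dop q ω Dstar S)
        + Dop q ω Dstar f * Dop q ω Dstar S)
      + Psi d e * (Lop q ω f * Lop q ω (Dop q ω Dstar S))
      = Lop q ω f * (phiP a b c * Dop q ω Dstar (Dop q ω Dstar S)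
          + Psi d e * Lop q ω (Dop q ω Dstar S))
        + phiP a b c * (Dop q ω Dstar f * Dop q ω Dstar S) := by ring
  rw [harg, hS] at h0
  rw [map_add] at h0
  have : Lop q ω f * (ν • Lop q ω S) = ν • Lop q ω (f * S) := by
    rw [lop_mul, mul_smul_comm]
  rw [this, map_smul, smul_eq_mul] at h0
  linear_combination h0

-- Moment relation: `d·(a+q·d)·v(φ) = q·(a·e² - b·e·d + c·d²)·v(1)`.
include hq0 hqω hDstar in
lemma moment_rel {v : PDual} {d e : ℂ} (hP : Pearson q ω Dstar a b c v d e) :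
    d * (a + q*d) * v (phiP a b c)
      = q * (a*e^2 - b*e*d + c*d^2) * v 1 := by
  have h1 : d * v X + e * v 1 = 0 := by
    have h0 := hP 1
    rw [D_one hq0 hqω hDstar, lop_one, mul_zero, zero_add, mul_one] at h0
    rw [show Psi d e = d • X + e • (1 : Polynomial ℂ) from by simp [Psi, smul_eq_C_mul]]
      at h0
    rw [map_add, map_smul, map_smul, smul_eq_mul, smul_eq_mul] at h0
    exact h0
  have h2 : v (phiP a b c) + q*d * v (X^2) + (q*e + ω*d) * v X + ω*e * v 1 = 0 := by
    have h0 := hP X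
    rw [D_X hq0 hqω hDstar, lop_X, mul_one] at h0
    rw [show Psi d e * (C q * X + C ω)
        = (q*d) • X^2 + (q*e + ω*d) • X + (ω*e) • (1 : Polynomial ℂ) from by
      simp only [Psi, smul_eq_C_mul, C_mul, C_add, mul_one]; ring] at h0
    rw [map_add, map_add, map_add, map_smul, map_smul, map_smul,
      smul_eq_mul, smul_eq_mul, smul_eq_mul] at h0
    linear_combination h0
  have h3 : v (phiP a b c) = a * v (X^2) + b * v X + c * v 1 := by
    rw [show phiP a b c = a • X^2 + b • X + c • (1 : Polynomial ℂ) from by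
      simp [phiP, smul_eq_C_mul]]
    rw [map_add, map_add, map_smul, map_smul, map_smul, smul_eq_mul, smul_eq_mul,
      smul_eq_mul]
  linear_combination (d*q*d) * h3 + (d*a) * h2 + (b*q*d - a*q*e - a*ω*d) * h1

lemma tc_add {p r : Polynomial ℂ} {n : ℕ} {v w : ℂ} (hp : TC p n v) (hr : TC r n w) :
    TC (p + r) n (v + w) :=
  ⟨le_trans (natDegree_add_le _ _) (sup_le hp.1 hr.1), by rw [coeff_add, hp.2, hr.2]⟩

lemma tc_phiP : TC (phiP a b c) 2 a :=
  ⟨natDegree_quadratic_le, by simp [phiP, coeff_C]⟩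

lemma tc_Psi (d e : ℂ) : TC (Psi d e) 1 d :=
  ⟨natDegree_linear_le, by simp [Psi, coeff_C]⟩

lemma tc_Xpow (n : ℕ) : TC (X^n : Polynomial ℂ) n 1 :=
  ⟨le_of_eq (natDegree_X_pow n), by simp⟩

lemma deg_drop {p : Polynomial ℂ} {n : ℕ} (h1 : p.natDegree ≤ n + 1)
    (h2 : p.coeff (n+1) = 0) : p.natDegree ≤ n := by
  rw [natDegree_le_iff_coeff_eq_zero]
  intro m hm
  rcases Nat.lt_or_ge m (n+2) with h | h
  · rw [show m = n+1 by omega]; exact h2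
  · exact coeff_eq_zero_of_natDegree_lt (lt_of_le_of_lt h1 (by omega))

-- The test polynomial `φ·D(Xⁿ) + ψ·L(Xⁿ)` has top coefficient `d_n` in slot `n+1`.
include hq0 hqω hDstar in
lemma tc_testpoly (d e : ℂ) (n : ℕ) :
    TC (phiP a b c * Dop q ω Dstar (X^n) + Psi d e * Lop q ω (X^n)) (n+1)
      (ddQ q a d n) := by
  have hR : TC (Psi d e * Lop q ω (X^n)) (n+1) (d * (q^n * 1)) := by
    have := tc_mul (tc_Psi d e) (tc_L (ω := ω) hq0 (tc_Xpow n))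
    rwa [show 1 + n = n + 1 by omega] at this
  rcases n with _ | m
  · have hL : phiP a b c * Dop q ω Dstar (X^0) = 0 := by
      rw [pow_zero, D_one hq0 hqω hDstar, mul_zero]
    rw [hL, zero_add]
    rw [show ddQ q a d 0 = d * (q^0 * 1) from by simp [ddQ, qB_zero]]
    exact hR
  · have hDx : TC (Dop q ω Dstar (X^(m+1))) m (qBracket q (m+1) * 1) :=
      tc_D hq0 hqω hDstar (tc_Xpow (m+1))
    have hL := tc_mul (tc_phiP (a := a) (b := b) (c := c)) hDx
    rw [show 2 + m = m + 2 by omega] at hL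
    have := tc_add hL hR
    rw [show m + 2 = m + 1 + 1 by omega] at this
    rwa [show a * (qBracket q (m+1) * 1) + d * (q^(m+1) * 1) = ddQ q a d (m+1) from by
      simp [ddQ]; ring] at this

-- Determinacy: Pearson functional with `v(1)=0` vanishes identically.
include hq0 hqω hDstar in
lemma determinacy {v : PDual} {d e : ℂ} (hP : Pearson q ω Dstar a b c v d e)
    (hd : ∀ n : ℕ, ddQ q a d n ≠ 0) (h1 : v 1 = 0) : v = 0 := by
  have key : ∀ n : ℕ, ∀ f : Polynomial ℂ, f.natDegree ≤ n → v f = 0 := by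
    intro n
    induction n with
    | zero =>
      intro f hf
      rw [Polynomial.eq_C_of_natDegree_le_zero hf]
      rw [show (C (f.coeff 0) : Polynomial ℂ) = (f.coeff 0) • (1 : Polynomial ℂ) from by
        simp [smul_eq_C_mul]]
      rw [map_smul, smul_eq_mul, h1, mul_zero]
    | succ n ih =>
      intro f hf
      set pn := phiP a b c * Dop q ω Dstar (X^n) + Psi d e * Lop q ω (X^n) with hpn
      have htc := tc_testpoly hq0 hqω hDstar (a := a) (b := b) (c := c) d e n
      rw [← hpn] at htc
      have hvpn : v pn = 0 := hP (X^n)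
      have hsplit : f = (f.coeff (n+1) / ddQ q a d n) • pn
          + (f - (f.coeff (n+1) / ddQ q a d n) • pn) := by ring
      rw [hsplit, map_add, map_smul, smul_eq_mul, hvpn, mul_zero, zero_add]
      apply ih
      apply deg_drop
      · apply le_trans (natDegree_sub_le _ _)
        apply sup_le hf
        apply le_trans (natDegree_smul_le _ _) htc.1
      · rw [coeff_sub, coeff_smul, htc.2, smul_eq_mul, div_mul_cancel₀ _ (hd n), sub_self]
  exact LinearMap.ext fun f => key f.natDegree f le_rfl

/-! ### Eigenvalues and eigenpolynomials -/

variable (q ω Dstar a b c)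

/-- Level-0 eigenvalues `μ_n = q^{-n}·[n]_q·d_{n-1}`. -/
def evq (a d : ℂ) : ℕ → ℂ
  | 0 => 0
  | n+1 => (q^(n+1))⁻¹ * qBracket q (n+1) * ddQ q a d n

/-- The level-0 second order operator. -/
def Mop (d e : ℂ) : Polynomial ℂ →ₗ[ℂ] Polynomial ℂ :=
  (Lop q⁻¹ (-ω/q)) ∘ₗ
    (LinearMap.mulLeft ℂ (phiP a b c) ∘ₗ (Dop q ω Dstar ∘ₗ Dop q ω Dstar)
      + LinearMap.mulLeft ℂ (Psi d e) ∘ₗ (Lop q ω ∘ₗ Dop q ω Dstar))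

lemma Mop_apply (d e : ℂ) (f : Polynomial ℂ) :
    Mop q ω Dstar a b c d e f
      = Lop q⁻¹ (-ω/q) (phiP a b c * Dop q ω Dstar (Dop q ω Dstar f)
        + Psi d e * Lop q ω (Dop q ω Dstar f)) := rfl

variable {q ω Dstar a b c}

include hq0 in
lemma eig_iff_Mop {d e : ℂ} {R : Polynomial ℂ} {μ : ℂ} :
    Eig q ω Dstar a b c d e R μ ↔ Mop q ω Dstar a b c d e R = μ • R := by
  constructor
  · intro h
    rw [Mop_apply, h, map_smul, ls_l hq0]
  · intro h
    have := congrArg (Lop q ω) h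
    rw [Mop_apply] at h
    have h2 := congrArg (Lop q ω) h
    rw [l_ls hq0, map_smul] at h2
    exact h2

include hq0 hqω hDstar in
lemma tc_Mop (d e : ℂ) {f : Polynomial ℂ} {n : ℕ} {v : ℂ} (h : TC f n v) :
    TC (Mop q ω Dstar a b c d e f) n (evq q a d n * v) := by
  have hq0' : (q⁻¹ : ℂ) ≠ 0 := inv_ne_zero hq0
  rcases n with _ | m
  · -- degree ≤ 0 : everything collapses to 0
    have hf : f = C v := by
      rw [Polynomial.eq_C_of_natDegree_le_zero h.1, h.2]
    have hDf : Dop q ω Dstar f = 0 := by rw [hf]; exact D_C hq0 hqω hDstar v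
    have hM : Mop q ω Dstar a b c d e f = 0 := by
      rw [Mop_apply, hDf]; simp
    rw [hM, show evq q a d 0 * v = 0 from by simp [evq]]
    exact ⟨by simp, by simp⟩
  · have hDf := tc_D hq0 hqω hDstar h
    rcases m with _ | m'
    · -- n = 1
      have hDfC : Dop q ω Dstar f = C (qBracket q 1 * v) := by
        rw [Polynomial.eq_C_of_natDegree_le_zero hDf.1, hDf.2]
      have hDDf : Dop q ω Dstar (Dop q ω Dstar f) = 0 := by
        rw [hDfC]; exact D_C hq0 hqω hDstar _
      rw [Mop_apply, hDDf, mul_zero, zero_add]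
      have h1 := tc_mul (tc_Psi d e) (tc_L (ω := ω) hq0 hDf)
      have := tc_L (q := q⁻¹) (ω := -ω/q) hq0' h1
      refine ⟨this.1, ?_⟩
      rw [this.2, evq, ddQ, qB_zero, qB_one]
      field_simp
      linear_combination (d * v) * (inv_mul_cancel₀ hq0)
    · -- n = m' + 2
      have hDDf := tc_D hq0 hqω hDstar hDf
      have hL := tc_mul (tc_phiP (a := a) (b := b) (c := c)) hDDf
      rw [show 2 + m' = m' + 2 by omega] at hL
      have hR := tc_mul (tc_Psi d e) (tc_L (ω := ω) hq0 hDf)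
      rw [show 1 + (m' + 1) = m' + 2 by omega] at hR
      have hsum := tc_add hL hR
      have := tc_L (q := q⁻¹) (ω := -ω/q) hq0' hsum
      rw [← Mop_apply] at this
      refine ⟨this.1, ?_⟩
      rw [this.2, evq, ddQ]
      have hqpow : (q^(m'+2))⁻¹ = (q⁻¹)^(m'+2) := by rw [inv_pow]
      rw [← hqpow]
      field_simp
      ring

variable (hd : ∀ n : ℕ, ddQ q a d' n ≠ 0)

include hq0 hqr in
lemma qB_pow_identity (m' s : ℕ) (d' : ℂ) :
    qBracket q (m'+s+2) * qBracket q (m'+s+1) - q^(s+1) * qBracket q (m'+1) * qBracket q m'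
      = qBracket q (s+1) * qBracket q (2*m'+s+2) -
        qBracket q (s+1) * qBracket q (s+1) * 0 := by
  have r1 : qBracket q (m'+s+2) = qBracket q (s+1) + q^(s+1) * qBracket q (m'+1) := by
    rw [show m'+s+2 = (s+1) + (m'+1) by omega, qB_add]
  have r2 : qBracket q (m'+s+1) = qBracket q (s+1) + q^(s+1) * qBracket q m' := by
    rw [show m'+s+1 = (s+1) + m' by omega, qB_add]
  have r3 : qBracket q (2*m'+s+2) = qBracket q (s+1) + q^(s+1) * qBracket q (2*m'+1) := by
    rw [show 2*m'+s+2 = (s+1) + (2*m'+1) by omega, qB_add]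
  have r4 : qBracket q (2*m'+1) = qBracket q (m'+1) + q^(m'+1) * qBracket q m' := by
    rw [show 2*m'+1 = (m'+1) + m' by omega, qB_add]
  have r5 : q^(m'+1) = (q-1) * qBracket q (m'+1) + 1 := (qB_geom (m'+1)).symm
  have r6 : q^(s+1) = (q-1) * qBracket q (s+1) + 1 := (qB_geom (s+1)).symm
  rw [r1, r2, r3, r4, r5, r6]
  ring

-- `q^n·(μ_n - μ_m) = [n-m]·d_{n+m-1}` for `m < n`.
include hq0 hqr in
lemma evq_sub {d' : ℂ} (m s : ℕ) :
    q^(m+s+1) * (evq q a d' (m+s+1) - evq q a d' m)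
      = qBracket q (s+1) * ddQ q a d' (2*m+s) := by
  rcases m with _ | m'
  · rw [show (0:ℕ)+s+1 = s+1 by omega, show 2*0+s = s by omega]
    show q^(s+1) * ((q^(s+1))⁻¹ * qBracket q (s+1) * ddQ q a d' s - 0) = _
    rw [sub_zero]
    field_simp
  · have key := qB_pow_identity hq0 hqr m' s d'
    rw [mul_zero, sub_zero] at key
    simp only [evq]
    have e1 : q^(m'+1+s+1) * ((q^(m'+1+s+1))⁻¹ * qBracket q (m'+1+s+1) * ddQ q a d' (m'+1+s)
        - (q^(m'+1))⁻¹ * qBracket q (m'+1) * ddQ q a d' m')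
        = qBracket q (m'+s+2) * ddQ q a d' (m'+s+1)
          - q^(s+1) * qBracket q (m'+1) * ddQ q a d' m' := by
      have hsplit : q^(m'+1+s+1) = q^(m'+1) * q^(s+1) := by ring
      rw [hsplit, show m'+1+s+1 = m'+s+2 by omega, show m'+1+s = m'+s+1 by omega]
      field_simp
    rw [e1]
    -- expand ddQ and use the bracket identity
    simp only [ddQ]
    have hd1 : qBracket q (m'+s+2) * q^(m'+s+1) - q^(s+1) * qBracket q (m'+1) * q^(m')
        = qBracket q (s+1) * q^(2*(m'+1)+s) := by
      have h1 : qBracket q (m'+s+2) = qBracket q (m'+1) + q^(m'+1) * qBracket q (s+1) := by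
        rw [show m'+s+2 = (m'+1) + (s+1) by omega, qB_add]
      rw [h1]
      rw [show 2*(m'+1)+s = (m'+1) + (m'+s+1) by omega]
      rw [show (m'+s+1 : ℕ) = (m'+1) + s by omega]
      rw [pow_add, pow_add, pow_add]
      ring
    rw [show 2*(m'+1)+s = 2*m'+s+2 by omega] at hd1 ⊢
    linear_combination d' * hd1 + a * key

include hqr in
lemma qB_succ_ne (n : ℕ) : qBracket q (n+1) ≠ 0 := qB_ne hqr (n+1) (Nat.succ_pos n)

include hq0 hqr in
lemma evq_ne {d' : ℂ} (hd : ∀ k : ℕ, ddQ q a d' k ≠ 0) {m n : ℕ} (h : m < n) :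
    evq q a d' m ≠ evq q a d' n := by
  obtain ⟨s, rfl⟩ : ∃ s, n = m + s + 1 := ⟨n - m - 1, by omega⟩
  intro heq
  have h2 := evq_sub hq0 hqr (a := a) (d' := d') m s
  rw [← heq, sub_self, mul_zero] at h2
  exact (mul_ne_zero (qB_succ_ne hqr s) (hd (2*m+s))) h2.symm

include hq0 hqr in
lemma evq_succ_ne {d' : ℂ} (hd : ∀ k : ℕ, ddQ q a d' k ≠ 0) (n : ℕ) :
    evq q a d' (n+1) ≠ 0 :=
  mul_ne_zero (mul_ne_zero (inv_ne_zero (pow_ne_zero _ hq0)) (qB_succ_ne hqr n)) (hd n)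

lemma degree_lt_slot {y : Polynomial ℂ} {n : ℕ} (h1 : y.natDegree ≤ n)
    (h2 : y.coeff n = 0) : y.degree < n := by
  rcases eq_or_ne y 0 with rfl | hy0
  · rw [degree_zero]; exact WithBot.bot_lt_coe n
  · rcases n with _ | m
    · exfalso
      apply hy0
      rw [Polynomial.eq_C_of_natDegree_le_zero h1, h2, C_0]
    · exact (natDegree_lt_iff_degree_lt hy0).mp (Nat.lt_succ_of_le (deg_drop h1 h2))

-- Existence of monic eigenpolynomials of every degree.
include hq0 hqω hDstar hqr in
lemma exists_eigpoly (d e : ℂ) (hd : ∀ k : ℕ, ddQ q a d k ≠ 0) (n : ℕ) :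
    ∃ R : Polynomial ℂ, R.Monic ∧ R.natDegree = n ∧
      Eig q ω Dstar a b c d e R (evq q a d n) := by
  set μ := evq q a d n with hμ
  set M := Mop q ω Dstar a b c d e with hM
  set T := M - μ • (LinearMap.id (R := ℂ) (M := Polynomial ℂ)) with hT
  have hTapp : ∀ p : Polynomial ℂ, T p = M p - μ • p := fun p => rfl
  have hmaps : ∀ p ∈ degreeLT ℂ n, T p ∈ degreeLT ℂ n := by
    intro p hp
    rw [mem_degreeLT] at hp ⊢
    by_cases hp0 : p = 0
    · rw [hp0, map_zero, degree_zero]; exact WithBot.bot_lt_coe n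
    · have hdegp : p.natDegree < n := (natDegree_lt_iff_degree_lt hp0).mpr hp
      have htc := tc_Mop hq0 hqω hDstar (a := a) (b := b) (c := c) d e
        (f := p) (n := p.natDegree) (v := p.coeff p.natDegree) ⟨le_rfl, rfl⟩
      have hdegT : (T p).natDegree ≤ p.natDegree := by
        rw [hTapp]
        exact le_trans (natDegree_sub_le _ _)
          (sup_le htc.1 (le_trans (natDegree_smul_le _ _) le_rfl))
      rcases eq_or_ne (T p) 0 with h0 | h0
      · rw [h0, degree_zero]; exact WithBot.bot_lt_coe n
      · exact (natDegree_lt_iff_degree_lt h0).mp (lt_of_le_of_lt hdegT hdegp)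
  haveI : Module.Finite ℂ (degreeLT ℂ n) := Module.Finite.equiv (degreeLTEquiv ℂ n).symm
  set Tr := T.restrict hmaps with hTr
  have hinj : Function.Injective Tr := by
    rw [← LinearMap.ker_eq_bot, LinearMap.ker_eq_bot']
    intro x hx
    have hx1 : T x.1 = 0 := congrArg Subtype.val hx
    by_contra hxne
    have hx10 : (x : Polynomial ℂ) ≠ 0 := by
      intro h0
      exact hxne (Subtype.ext h0)
    have hMx : M x.1 = μ • x.1 := by
      rw [hTapp] at hx1
      exact sub_eq_zero.mp hx1
    set k := (x : Polynomial ℂ).natDegree with hk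
    have htc := tc_Mop hq0 hqω hDstar (a := a) (b := b) (c := c) d e
      (f := x.1) (n := k) (v := (x : Polynomial ℂ).coeff k) ⟨le_rfl, rfl⟩
    have hco := htc.2
    rw [hMx, coeff_smul, smul_eq_mul] at hco
    have hlc : (x : Polynomial ℂ).coeff k ≠ 0 := by
      rw [hk]
      exact leadingCoeff_ne_zero.mpr hx10
    have : μ = evq q a d k := mul_right_cancel₀ hlc hco
    have hkn : k < n := (natDegree_lt_iff_degree_lt hx10).mpr (mem_degreeLT.mp x.2)
    exact evq_ne hq0 hqr hd hkn (this.symm.trans hμ)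
  have hsurj := (LinearMap.injective_iff_surjective).mp hinj
  have htcn := tc_Mop hq0 hqω hDstar (a := a) (b := b) (c := c) d e (tc_Xpow n)
  have hy : μ • (X^n : Polynomial ℂ) - M (X^n) ∈ degreeLT ℂ n := by
    rw [mem_degreeLT]
    apply degree_lt_slot
    · exact le_trans (natDegree_sub_le _ _)
        (sup_le (le_trans (natDegree_smul_le _ _) (le_of_eq (natDegree_X_pow n))) htcn.1)
    · rw [coeff_sub, coeff_smul, smul_eq_mul, htcn.2, coeff_X_pow, if_pos rfl]
      ring
  obtain ⟨g, hg⟩ := hsurj ⟨_, hy⟩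
  have hgval : T g.1 = μ • (X^n : Polynomial ℂ) - M (X^n) := congrArg Subtype.val hg
  have hgdeg : (g : Polynomial ℂ).degree < n := mem_degreeLT.mp g.2
  have hgnat : (g : Polynomial ℂ).natDegree ≤ n := by
    rcases eq_or_ne (g : Polynomial ℂ) 0 with h0 | h0
    · rw [h0, natDegree_zero]; omega
    · exact le_of_lt ((natDegree_lt_iff_degree_lt h0).mpr hgdeg)
  have hgco : (g : Polynomial ℂ).coeff n = 0 := by
    rcases eq_or_ne (g : Polynomial ℂ) 0 with h0 | h0
    · rw [h0, coeff_zero]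
    · exact coeff_eq_zero_of_degree_lt (lt_of_lt_of_le hgdeg le_rfl)
  refine ⟨X^n + g.1, ?_, ?_, ?_⟩
  · apply monic_of_natDegree_le_of_coeff_eq_one n
    · exact le_trans (natDegree_add_le _ _)
        (sup_le (le_of_eq (natDegree_X_pow n)) hgnat)
    · rw [coeff_add, coeff_X_pow, if_pos rfl, hgco, add_zero]
  · apply le_antisymm
    · exact le_trans (natDegree_add_le _ _)
        (sup_le (le_of_eq (natDegree_X_pow n)) hgnat)
    · apply le_natDegree_of_ne_zero
      rw [coeff_add, coeff_X_pow, if_pos rfl, hgco, add_zero]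
      exact one_ne_zero
  · rw [eig_iff_Mop hq0, ← hM]
    rw [hTapp] at hgval
    rw [map_add, smul_add]
    linear_combination (norm := module) hgval

/-! ### The hierarchy chain -/

variable (q ω Dstar a b c)

/-- Parameter sequence `d^{(k)}`. -/
def dk (a d : ℂ) : ℕ → ℂ
  | 0 => d
  | k+1 => q^2 * dk a d k + a*(1+q)

/-- Parameter sequence `e^{(k)}`. -/
def ek (a b d e : ℂ) : ℕ → ℂ
  | 0 => e
  | k+1 => q * ek a b d e k + ω*(q * dk q a d k + a) + b

/-- Iterated derived functionals. -/
def vkF (u : PDual) : ℕ → PDual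
  | 0 => u
  | k+1 => derF q ω a b c (vkF u k)

/-- Iterated `D`-images of the eigenpolynomials. -/
def Tk (Rp : ℕ → Polynomial ℂ) : ℕ → ℕ → Polynomial ℂ
  | 0, n => Rp n
  | k+1, n => Dop q ω Dstar (Tk Rp k (n+1))

/-- Eigenvalues along the hierarchy. -/
def evk (a d : ℂ) : ℕ → ℕ → ℂ
  | 0, n => evq q a d n
  | k+1, n => q * evk a d k (n+1) - dk q a d k

/-- Leading coefficients along the hierarchy. -/
def lamk : ℕ → ℕ → ℂ
  | 0, _ => 1
  | k+1, n => qBracket q (n+1) * lamk k (n+1)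

variable {q ω Dstar a b c}

lemma qB_two : qBracket q 2 = 1 + q := by
  simp [qBracket, Finset.sum_range_succ]

lemma dk_eq (a d : ℂ) (k : ℕ) : dk q a d k = ddQ q a d (2*k) := by
  induction k with
  | zero => simp [dk, ddQ, qB_zero]
  | succ k ih =>
    show q^2 * dk q a d k + a*(1+q) = _
    rw [ih, show 2*(k+1) = 2 + 2*k by omega]
    simp only [ddQ]
    rw [qB_add, qB_two, pow_add]
    ring

lemma ek_eq (a b d e : ℂ) (k : ℕ) : ek q ω a b d e k = eeQ q ω a b d e k := by
  induction k with
  | zero => simp [ek, eeQ, qB_zero]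
  | succ k ih =>
    show q * ek q ω a b d e k + ω*(q * dk q a d k + a) + b = _
    rw [ih, dk_eq]
    have r1 : qBracket q (k+1) = 1 + q * qBracket q k := by
      rw [show k+1 = 1+k by omega, qB_add, qB_one, pow_one]
    have r2 : qBracket q (2*k) = qBracket q k + q^k * qBracket q k := by
      rw [show 2*k = k+k by omega, qB_add]
    have r3 : (q:ℂ)^k = (q-1) * qBracket q k + 1 := (qB_geom k).symm
    simp only [eeQ, ddQ]
    rw [r1, r2, show 2*k = k+k by omega, pow_add, pow_succ, r3]
    ring

lemma lamk_ne (hqr : ∀ n : ℕ, 0 < n → q ^ n = 1 → q = 1) (k n : ℕ) :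
    lamk q k n ≠ 0 := by
  induction k generalizing n with
  | zero => exact one_ne_zero
  | succ k ih => exact mul_ne_zero (qB_succ_ne hqr n) (ih (n+1))

include hq0 in
lemma ddQ_shift (d' : ℂ) (j m : ℕ) :
    ddQ q a d' j * q^m + a * qBracket q m = ddQ q a d' (m + j) := by
  simp only [ddQ]
  rw [qB_add, pow_add]
  ring

include hq0 in
lemma evk_closed (a d : ℂ) (k n : ℕ) :
    evk q a d k (n+1) = (q^(n+1))⁻¹ * qBracket q (n+1) * ddQ q a d (n + 2*k) := by
  induction k generalizing n with
  | zero => show evq q a d (n+1) = _; rw [evq]; rw [show n + 2*0 = n by omega]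
  | succ k ih =>
    show q * evk q a d k (n+2) - dk q a d k = _
    rw [show (n+2 : ℕ) = (n+1)+1 from rfl, ih, dk_eq]
    rw [show n+1+2*k = (n+1) + 2*k by omega]
    -- the d-identity : [n+2]·d_{n+1+2k} - q^{n+1}·d_{2k} = [n+1]·d_{n+2+2k}
    have key : qBracket q (n+2) * ddQ q a d ((n+1) + 2*k) - q^(n+1) * ddQ q a d (2*k)
        = qBracket q (n+1) * ddQ q a d (n + 2*(k+1)) := by
      have h1 : ddQ q a d ((n+1) + 2*k) = ddQ q a d (2*k) * q^(n+1) + a * qBracket q (n+1) :=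
        (ddQ_shift hq0 d (2*k) (n+1)).symm
      have h2 : ddQ q a d (n + 2*(k+1)) = ddQ q a d (2*k) * q^(n+2) + a * qBracket q (n+2) := by
        rw [ddQ_shift hq0 d (2*k) (n+2), show n+2+2*k = n+2*(k+1) by omega]
      have h3 : qBracket q (n+2) = 1 + q * qBracket q (n+1) := by
        rw [show n+2 = 1+(n+1) by omega, qB_add, qB_one, pow_one]
      rw [h1, h2, h3, pow_succ q (n+1)]
      ring
    have hq1 : (q:ℂ)^(n+2) = q^(n+1) * q := pow_succ q (n+1)
    have lhs_eq : q * ((q^(n+1) * q)⁻¹ * qBracket q (n+2) * ddQ q a d ((n+1)+2*k))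
        = (q^(n+1))⁻¹ * (qBracket q (n+2) * ddQ q a d ((n+1)+2*k)) := by
      field_simp
    rw [show n+1+1 = n+2 from rfl, hq1, lhs_eq]
    have hinv : (q^(n+1))⁻¹ * q^(n+1) = (1:ℂ) := inv_mul_cancel₀ (pow_ne_zero _ hq0)
    linear_combination ((q^(n+1) : ℂ))⁻¹ * key + (ddQ q a d (2*k)) * hinv

include hq0 hqr in
lemma evk_ne {d : ℂ} (hd : ∀ j : ℕ, ddQ q a d j ≠ 0) (k n : ℕ) :
    evk q a d k (n+1) ≠ 0 := by
  rw [evk_closed hq0]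
  exact mul_ne_zero (mul_ne_zero (inv_ne_zero (pow_ne_zero _ hq0))
    (qB_succ_ne hqr n)) (hd (n + 2*k))

include hq0 hqω hDstar in
lemma pearson_chain {u : PDual} {d e : ℂ} (hP : Pearson q ω Dstar a b c u d e) (k : ℕ) :
    Pearson q ω Dstar a b c (vkF q ω a b c u k) (dk q a d k) (ek q ω a b d e k) := by
  induction k with
  | zero => exact hP
  | succ k ih => exact pearson_step hq0 hqω hDstar ih

include hq0 hqω hDstar in
lemma eig_chain {d e : ℂ} {Rp : ℕ → Polynomial ℂ}
    (hEig : ∀ n, Eig q ω Dstar a b c d e (Rp n) (evq q a d n)) (k n : ℕ) :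
    Eig q ω Dstar a b c (dk q a d k) (ek q ω a b d e k)
      (Tk q ω Dstar Rp k n) (evk q a d k n) := by
  induction k generalizing n with
  | zero => exact hEig n
  | succ k ih => exact eig_step hq0 hqω hDstar (ih (n+1))

include hq0 hqω hDstar in
lemma tc_Tk {Rp : ℕ → Polynomial ℂ}
    (hmon : ∀ n, (Rp n).Monic) (hdeg : ∀ n, (Rp n).natDegree = n) (k n : ℕ) :
    TC (Tk q ω Dstar Rp k n) n (lamk q k n) := by
  induction k generalizing n with
  | zero =>
    refine ⟨le_of_eq (hdeg n), ?_⟩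
    have h1 : (Rp n).coeff ((Rp n).natDegree) = 1 := hmon n
    rwa [hdeg n] at h1
  | succ k ih =>
    have := tc_D hq0 hqω hDstar (ih (n+1))
    exact this

lemma eval_phiP (x : ℂ) : (phiP a b c).eval x = a*x^2 + b*x + c := by
  simp [phiP]

include hq0 in
lemma vk_L (u : PDual) (k : ℕ) (h : Polynomial ℂ) :
    vkF q ω a b c u (k+1) (Lop q ω h) = vkF q ω a b c u k (phiP a b c * h) := by
  show derF q ω a b c (vkF q ω a b c u k) (Lop q ω h) = _
  rw [derF_apply, ls_l hq0]

include hq0 hqω hDstar in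
lemma norm_step {u : PDual} {d e : ℂ} (hP : Pearson q ω Dstar a b c u d e)
    {Rp : ℕ → Polynomial ℂ}
    (hEig : ∀ n, Eig q ω Dstar a b c d e (Rp n) (evq q a d n)) (k n : ℕ) :
    evk q a d k (n+1) * vkF q ω a b c u k
        (Lop q ω (Tk q ω Dstar Rp k (n+1) * Tk q ω Dstar Rp k (n+1)))
      = - vkF q ω a b c u (k+1)
        (Lop q ω (Tk q ω Dstar Rp (k+1) n * Tk q ω Dstar Rp (k+1) n)) := by
  have hPk := pearson_chain hq0 hqω hDstar hP k
  have hEk := eig_chain hq0 hqω hDstar hEig k (n+1)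
  have hsym := symm_rel hq0 hqω hDstar hPk hEk (Tk q ω Dstar Rp k (n+1))
  rw [vk_L hq0]
  show _ = - vkF q ω a b c u k (phiP a b c *
    (Dop q ω Dstar (Tk q ω Dstar Rp k (n+1)) * Dop q ω Dstar (Tk q ω Dstar Rp k (n+1))))
  exact hsym

include hq0 hqω hDstar in
lemma base_norm {u : PDual} {Rp : ℕ → Polynomial ℂ}
    (hmon : ∀ n, (Rp n).Monic) (hdeg : ∀ n, (Rp n).natDegree = n) (k : ℕ) :
    vkF q ω a b c u k (Lop q ω (Tk q ω Dstar Rp k 0 * Tk q ω Dstar Rp k 0))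
      = (lamk q k 0 * lamk q k 0) * vkF q ω a b c u k 1 := by
  have htc := tc_Tk hq0 hqω hDstar hmon hdeg k 0
  have hTC : Tk q ω Dstar Rp k 0 = C (lamk q k 0) := by
    rw [Polynomial.eq_C_of_natDegree_le_zero htc.1, htc.2]
  rw [hTC, ← C_mul, lop_C]
  rw [show (C (lamk q k 0 * lamk q k 0) : Polynomial ℂ)
    = (lamk q k 0 * lamk q k 0) • (1 : Polynomial ℂ) from by simp [smul_eq_C_mul]]
  rw [map_smul, smul_eq_mul]

include hq0 hqω hDstar in
lemma v1_step {u : PDual} {d e : ℂ} (hP : Pearson q ω Dstar a b c u d e) (k : ℕ) :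
    ddQ q a d (2*k) * ddQ q a d (2*k+1) * vkF q ω a b c u (k+1) 1
      = q * (a * (eeQ q ω a b d e k)^2 - b * eeQ q ω a b d e k * ddQ q a d (2*k)
          + c * ddQ q a d (2*k)^2) * vkF q ω a b c u k 1 := by
  have hV : vkF q ω a b c u (k+1) 1 = vkF q ω a b c u k (phiP a b c) := by
    show derF q ω a b c (vkF q ω a b c u k) 1 = _
    rw [derF_apply, lop_one, mul_one]
  have hmom := moment_rel hq0 hqω hDstar (pearson_chain hq0 hqω hDstar hP k)
  rw [dk_eq, ek_eq] at hmom
  have hshift : a + q * ddQ q a d (2*k) = ddQ q a d (2*k+1) := by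
    have := ddQ_shift hq0 (a := a) d (2*k) 1
    rw [qB_one, pow_one] at this
    rw [show 2*k+1 = 1+2*k by omega, ← this]
    ring
  rw [hV, ← hshift]
  exact hmom

include hq0 hqω hDstar in
lemma v1_ne {u : PDual} {d e : ℂ} (hP : Pearson q ω Dstar a b c u d e)
    (hd : ∀ j : ℕ, ddQ q a d j ≠ 0)
    (heval : ∀ k : ℕ, (phiP a b c).eval (-(eeQ q ω a b d e k) / ddQ q a d (2*k)) ≠ 0)
    (hu1 : u 1 ≠ 0) : ∀ k, vkF q ω a b c u k 1 ≠ 0 := by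
  intro k
  induction k with
  | zero => exact hu1
  | succ k ih =>
    have hstep := v1_step hq0 hqω hDstar hP k
    intro h0
    rw [h0, mul_zero] at hstep
    set D0 := ddQ q a d (2*k) with hD0
    set E0 := eeQ q ω a b d e k with hE0
    have h2k : D0 ≠ 0 := hd (2*k)
    have hnum : a * E0^2 - b * E0 * D0 + c * D0^2
        = D0^2 * ((phiP a b c).eval (-E0 / D0)) := by
      rw [eval_phiP]
      field_simp
      ring
    have : q * (a * E0^2 - b * E0 * D0 + c * D0^2) * vkF q ω a b c u k 1 ≠ 0 := by
      apply mul_ne_zero (mul_ne_zero hq0 _) ih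
      rw [hnum]
      exact mul_ne_zero (pow_ne_zero _ h2k) (heval k)
    exact this hstep.symm

include hq0 hqω hDstar in
lemma norm_ne {u : PDual} {d e : ℂ} (hP : Pearson q ω Dstar a b c u d e)
    (hd : ∀ j : ℕ, ddQ q a d j ≠ 0)
    (heval : ∀ k : ℕ, (phiP a b c).eval (-(eeQ q ω a b d e k) / ddQ q a d (2*k)) ≠ 0)
    (hu1 : u 1 ≠ 0) {Rp : ℕ → Polynomial ℂ}
    (hmon : ∀ n, (Rp n).Monic) (hdeg : ∀ n, (Rp n).natDegree = n)
    (hEig : ∀ n, Eig q ω Dstar a b c d e (Rp n) (evq q a d n))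
    (hqr : ∀ n : ℕ, 0 < n → q ^ n = 1 → q = 1) : ∀ n k,
    vkF q ω a b c u k (Lop q ω (Tk q ω Dstar Rp k n * Tk q ω Dstar Rp k n)) ≠ 0 := by
  intro n
  induction n with
  | zero =>
    intro k
    rw [base_norm hq0 hqω hDstar hmon hdeg k]
    exact mul_ne_zero (mul_ne_zero (lamk_ne hqr k 0) (lamk_ne hqr k 0))
      (v1_ne hq0 hqω hDstar hP hd heval hu1 k)
  | succ n ih =>
    intro k
    have hstep := norm_step hq0 hqω hDstar hP hEig k n
    intro h0
    rw [h0, mul_zero] at hstep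
    exact (ih (k+1)) (neg_eq_zero.mp hstep.symm)

include hq0 hqω hDstar hqr in
lemma ortho {u : PDual} {d e : ℂ} (hP : Pearson q ω Dstar a b c u d e)
    (hd : ∀ j : ℕ, ddQ q a d j ≠ 0) {Rp : ℕ → Polynomial ℂ}
    (hEig : ∀ n, Eig q ω Dstar a b c d e (Rp n) (evq q a d n))
    {m n : ℕ} (hmn : m < n) : u (Lop q ω (Rp m * Rp n)) = 0 := by
  have h1 := symm_rel hq0 hqω hDstar hP (hEig n) (Rp m)
  have h2 := symm_rel hq0 hqω hDstar hP (hEig m) (Rp n)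
  rw [mul_comm (Rp n) (Rp m)] at h2
  rw [mul_comm (Dop q ω Dstar (Rp n)) (Dop q ω Dstar (Rp m))] at h2
  have hsub : (evq q a d n - evq q a d m) * u (Lop q ω (Rp m * Rp n)) = 0 := by
    linear_combination h1 - h2
  rcases mul_eq_zero.mp hsub with h | h
  · exact absurd (sub_eq_zero.mp h).symm (evq_ne hq0 hqr hd hmn)
  · exact h

include hq0 hqω hDstar hqr in
lemma regular_of_pearson {u : PDual} (hu : u ≠ 0) {d e : ℂ}
    (hP : Pearson q ω Dstar a b c u d e)
    (hd : ∀ j : ℕ, ddQ q a d j ≠ 0)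
    (heval : ∀ k : ℕ, (phiP a b c).eval (-(eeQ q ω a b d e k) / ddQ q a d (2*k)) ≠ 0) :
    IsRegularFunc u := by
  have hu1 : u 1 ≠ 0 := fun h0 => hu (determinacy hq0 hqω hDstar hP hd h0)
  choose Rp hmon hdeg hEig using exists_eigpoly hq0 hqω hDstar hqr d e hd
  have key : ∀ m n : ℕ, ((q^m)⁻¹ • Lop q ω (Rp m)) * ((q^n)⁻¹ • Lop q ω (Rp n))
      = ((q^m)⁻¹ * (q^n)⁻¹) • (Lop q ω (Rp m * Rp n)) := by
    intro m n
    rw [lop_mul, smul_mul_smul_comm]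
  refine ⟨fun n => (q^n)⁻¹ • Lop q ω (Rp n), ?_, ?_, ?_⟩
  · intro n
    have htc1 : TC (Rp n) n 1 := by
      refine ⟨le_of_eq (hdeg n), ?_⟩
      have h1 : (Rp n).coeff ((Rp n).natDegree) = 1 := hmon n
      rwa [hdeg n] at h1
    have htc := tc_L (ω := ω) hq0 htc1
    have hndeg : ((q^n)⁻¹ • Lop q ω (Rp n)).natDegree ≤ n :=
      le_trans (natDegree_smul_le _ _) htc.1
    have hco : ((q^n)⁻¹ • Lop q ω (Rp n)).coeff n = 1 := by
      rw [coeff_smul, htc.2, smul_eq_mul, mul_one, inv_mul_cancel₀ (pow_ne_zero n hq0)]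
    exact ⟨monic_of_natDegree_le_of_coeff_eq_one n hndeg hco,
      le_antisymm hndeg (le_natDegree_of_ne_zero (by rw [hco]; exact one_ne_zero))⟩
  · intro m n hmn
    rw [key, map_smul, smul_eq_mul]
    rcases lt_or_gt_of_ne hmn with h | h
    · rw [ortho hq0 hqω hDstar hqr hP hd hEig h, mul_zero]
    · rw [mul_comm (Rp m) (Rp n), ortho hq0 hqω hDstar hqr hP hd hEig h, mul_zero]
  · intro n
    rw [pow_two, key, map_smul, smul_eq_mul]
    apply mul_ne_zero
    · exact mul_ne_zero (inv_ne_zero (pow_ne_zero n hq0)) (inv_ne_zero (pow_ne_zero n hq0))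
    · exact norm_ne hq0 hqω hDstar hP hd heval hu1 hmon hdeg hEig hqr n 0

end W

theorem stmt_4 (q ω : ℂ) (hq0 : q ≠ 0) (hqω : q ≠ 1 ∨ ω ≠ 0)
    (hqr : ∀ n : ℕ, 0 < n → q ^ n = 1 → q = 1)
    (a b c d e : ℂ) (φ ψ : Polynomial ℂ)
    (hφ : φ = C a * X ^ 2 + C b * X + C c) (hψ : ψ = C d * X + C e)
    (hne : φ ≠ 0 ∨ ψ ≠ 0)
    (Dstar : Polynomial ℂ →ₗ[ℂ] Polynomial ℂ) (hDstar : IsHahn q⁻¹ (-ω / q) Dstar)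
    (u : PDual) (hu : u ≠ 0)
    (heq : hahnDual q Dstar (pMul φ u) = pMul ψ u)
    (hcond : ∀ n : ℕ, ddQ q a d n ≠ 0 ∧
      φ.eval (-(eeQ q ω a b d e n) / ddQ q a d (2 * n)) ≠ 0) :
    IsRegularFunc u := by
  subst hφ
  subst hψ
  have heqf : ∀ f : Polynomial ℂ, (-q⁻¹) * u ((C a * X ^ 2 + C b * X + C c) * Dstar f)
      = u ((C d * X + C e) * f) := by
    intro f
    have := LinearMap.congr_fun heq f
    simpa [hahnDual, pMul, LinearMap.mulLeft_apply, smul_eq_mul] using this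
  have hP : W.Pearson q ω Dstar a b c u d e := by
    intro g
    have h := heqf (Lop q ω g)
    have hDg : u (W.phiP a b c * W.Dop q ω Dstar g)
        = q⁻¹ * u ((C a * X ^ 2 + C b * X + C c) * Dstar (Lop q ω g)) := by
      show u (W.phiP a b c * (q⁻¹ • Dstar (Lop q ω g))) = _
      rw [mul_smul_comm, map_smul, smul_eq_mul]
      rfl
    rw [map_add, hDg]
    have : q⁻¹ * u ((C a * X ^ 2 + C b * X + C c) * Dstar (Lop q ω g))
        = - u ((C d * X + C e) * Lop q ω g) := by linear_combination -h
    rw [this]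
    show -u ((C d * X + C e) * Lop q ω g) + u (W.Psi d e * Lop q ω g) = 0
    show -u ((C d * X + C e) * Lop q ω g) + u ((C d * X + C e) * Lop q ω g) = 0
    ring
  exact W.regular_of_pearson hq0 hqω hDstar hqr hu hP
    (fun j => (hcond j).1) (fun k => (hcond k).2)


end HahnOPSPaper
end
end

section
/- Let u be a nonzero linear functional on 𝒫 satisfying D_{q,ω}(φu) = ψu, where φ has degree at most 2 and ψ has degree at most 1, and set u^[1] := L_{q,ω}(φu). Let (Q_n)_{n≥0} be any simple set of polynomials (deg Q_n = n for all n), and for each n ≥ 0 define R_{n+1} := φ·(D*_{q,ω}Q_n) + q·ψ·Q_n. Then the functional equation D_{1/q,−ω/q}(Q_n·u^[1]) = R_{n+1}·u holds in 𝒫* for every n ≥ 0. -/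
open Polynomial

noncomputable section

namespace HahnOPSPaper

theorem stmt_7 (q ω : ℂ) (hq0 : q ≠ 0) (hqω : q ≠ 1 ∨ ω ≠ 0)
    (hqr : ∀ n : ℕ, 0 < n → q ^ n = 1 → q = 1)
    (φ ψ : Polynomial ℂ) (hφ : φ.natDegree ≤ 2) (hψ : ψ.natDegree ≤ 1)
    (Dstar : Polynomial ℂ →ₗ[ℂ] Polynomial ℂ) (hDstar : IsHahn q⁻¹ (-ω / q) Dstar)
    (Dqw : Polynomial ℂ →ₗ[ℂ] Polynomial ℂ) (hDqw : IsHahn q ω Dqw)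
    (u : PDual) (hu : u ≠ 0)
    (heq : hahnDual q Dstar (pMul φ u) = pMul ψ u)
    (Q : ℕ → Polynomial ℂ) (hQ : ∀ n : ℕ, (Q n).degree = (n : WithBot ℕ)) :
    ∀ n : ℕ,
      hahnDual q⁻¹ Dqw (pMul (Q n) (LDual q ω (pMul φ u))) =
        pMul (φ * Dstar (Q n) + C q * (ψ * Q n)) u := by
  set p : Polynomial ℂ := C q⁻¹ * X + C (-ω / q) with hp
  set w : Polynomial ℂ := C (q⁻¹ - 1) * X + C (-ω / q) with hwdef
  have hw : w ≠ 0 := by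
    intro h0
    have hc1 : q⁻¹ - 1 = 0 := by
      have := congrArg (fun r => Polynomial.coeff r 1) h0
      simpa [hwdef, coeff_X, coeff_C] using this
    have hc0 : -ω / q = 0 := by
      have := congrArg (fun r => Polynomial.coeff r 0) h0
      simpa [hwdef, coeff_X, coeff_C] using this
    have hq1 : q = 1 := by
      have : q⁻¹ = 1 := by linear_combination hc1
      simpa [inv_eq_one] using this
    have hω : ω = 0 := by
      field_simp at hc0; linear_combination -hc0
    rcases hqω with h | h <;> [exact h hq1; exact h hω]
  have hqq : q * q⁻¹ = 1 := mul_inv_cancel₀ hq0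
  -- composition facts
  have hcomp1 : (C (q - 1) * X + C ω).comp p = -w := by
    simp only [hp, hwdef, add_comp, mul_comp, C_comp, X_comp]
    have e1 : (q - 1) * q⁻¹ = -(q⁻¹ - 1) := by field_simp; ring
    have e2 : (q - 1) * (-ω / q) + ω = -(-ω / q) := by field_simp; ring
    have E1 := congrArg C e1
    have E2 := congrArg C e2
    rw [map_mul, map_neg] at E1
    rw [map_add, map_mul, map_neg] at E2
    linear_combination X * E1 + E2
  have hcomp2 : (C q * X + C ω).comp p = X := by
    simp only [hp, add_comp, mul_comp, C_comp, X_comp]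
    have e1 : q * (-ω / q) + ω = 0 := by field_simp; ring
    have E0 := congrArg C hqq
    have E1 := congrArg C e1
    rw [map_mul] at E0
    rw [map_add, map_mul] at E1
    simp only [map_one, map_zero] at E0 E1
    linear_combination X * E0 + E1
  have hchain : ∀ f : Polynomial ℂ, (Dqw f).comp p = Dstar f := by
    intro f
    apply mul_left_cancel₀ hw
    have h1 := congrArg (fun g => g.comp p) (hDqw f)
    simp only [mul_comp, sub_comp, comp_assoc, hcomp1, hcomp2, comp_X] at h1
    have h2 := hDstar f
    rw [show (C (q⁻¹ - 1) * X + C (-ω / q)) = w from rfl] at h2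
    linear_combination -h1 - h2
  have hprod : ∀ P f : Polynomial ℂ, Dstar (P * f) = Dstar P * f + P.comp p * Dstar f := by
    intro P f
    apply mul_left_cancel₀ hw
    have hP := hDstar P
    have hf := hDstar f
    have hPf := hDstar (P * f)
    rw [mul_comp] at hPf
    rw [show (C (q⁻¹ - 1) * X + C (-ω / q)) = w from rfl] at hP hf hPf
    linear_combination hPf - f * hP - P.comp p * hf
  have hrec : ∀ g : Polynomial ℂ, u (φ * Dstar g) = -q * u (ψ * g) := by
    intro g
    have h := LinearMap.congr_fun heq g
    simp only [hahnDual, pMul, LinearMap.smul_apply, LinearMap.comp_apply,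
      LinearMap.mulLeft_apply, smul_eq_mul] at h
    rw [← h]; field_simp
  intro n
  refine LinearMap.ext fun f => ?_
  simp only [hahnDual, pMul, LDual, Lop, LinearMap.smul_apply, LinearMap.comp_apply,
    LinearMap.mulLeft_apply, AlgHom.toLinearMap_apply, smul_eq_mul, inv_inv,
    ← comp_eq_aeval]
  rw [show (C q⁻¹ * X + C (-ω / q)) = p from rfl, mul_comp, hchain f]
  have key : (φ * Dstar (Q n) + C q * (ψ * Q n)) * f
      = φ * Dstar (Q n * f) + C q * (ψ * (Q n * f)) - φ * ((Q n).comp p * Dstar f) := by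
    rw [hprod (Q n) f]; ring
  rw [key, map_sub, map_add]
  have h1 : u (φ * Dstar (Q n * f)) = -q * u (ψ * (Q n * f)) := hrec (Q n * f)
  have h2 : u (C q * (ψ * (Q n * f))) = q * u (ψ * (Q n * f)) := by
    rw [← smul_eq_C_mul, map_smul, smul_eq_mul]
  rw [h1, h2]
  field_simp
  ring


end HahnOPSPaper
end
end
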